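/- arXiv:1602.07682 — 6 statements merged into one kernel-verified Lean document; each statement's English description precedes it below -/
import Mathlib

section
/- Suppose the series Σ_{n=2}^∞ |aₙ| r^{μn} converges for every 0 ≤ r < 1 and that Σ_{n=2}^∞ Ξ(n)·|aₙ| ≤ (A−B)(1−γ). Then F_μ belongs to the class E_{k,m}(Φ_μ,Ψ_μ,A,B,μ,γ); that is, the series defining F_μ, G and H converge absolutely at every z ∈ 𝕌 and, for every z ∈ 𝕌 with z ≠ 0, |G(z) − H(z)| < |(A−B)(1−γ)·H(z) − B·(G(z) − H(z))|. -/
open Complex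

/-- `Ξ(n) = (1−B)((μn)^k ϑₙ − (μn)^m λₙ) + (A−B)(1−γ)(μn)^m λₙ`. -/
noncomputable def Xi (μ A B γ : ℝ) (k m : ℕ) (ϑ lam : ℕ → ℝ) (n : ℕ) : ℝ :=
  (1 - B) * ((μ * n) ^ k * ϑ n - (μ * n) ^ m * lam n) +
    (A - B) * (1 - γ) * ((μ * n) ^ m * lam n)

/-- The term of the series `G(z) = z + Σ (μn)^k ϑₙ aₙ z^{μn}`
(representing `D_μ^k(F_μ∗Φ_μ)(z)`); with `c n` a general complex coefficient,
`pser μ c z = z + Σ_{n≥2} cₙ z^{μn}` where `z^{μn}` is the principal power. -/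
noncomputable def pser (μ : ℝ) (c : ℕ → ℂ) (z : ℂ) : ℂ :=
  z + ∑' n : ℕ, c (n + 2) * z ^ ((μ * (n + 2 : ℕ) : ℝ) : ℂ)

set_option maxHeartbeats 1000000 in
/-- Theorem 2.1 of the paper: if `Σ_{n≥2} |aₙ| r^{μn}` converges for all
`0 ≤ r < 1` and `Σ_{n≥2} Ξ(n)|aₙ| ≤ (A−B)(1−γ)`, then `F_μ ∈ E_{k,m}(Φ_μ,Ψ_μ,A,B,μ,γ)`:
the series for `F_μ`, `G = D_μ^k(F_μ∗Φ_μ)` and `H = D_μ^m(F_μ∗Ψ_μ)` converge absolutely on 𝕌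
and `|G(z) − H(z)| < |(A−B)(1−γ)H(z) − B(G(z) − H(z))|` for `z ∈ 𝕌 ∖ {0}`. -/
theorem stmt0 (μ A B γ : ℝ) (k m : ℕ) (a : ℕ → ℂ) (ϑ lam : ℕ → ℝ)
    (hμ : 1 ≤ μ) (hkm : m ≤ k)
    (hB : -1 ≤ B) (hBA : B < A) (hA : A ≤ 1) (hB0 : B < 0)
    (hγ0 : 0 ≤ γ) (hγ1 : γ < 1)
    (hlam : ∀ n, 2 ≤ n → 0 ≤ lam n) (hϑ : ∀ n, 2 ≤ n → lam n ≤ ϑ n)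
    (hconv : ∀ r : ℝ, 0 ≤ r → r < 1 →
      Summable fun n : ℕ => ‖(a (n + 2))‖ * r ^ (μ * (n + 2 : ℕ) : ℝ))
    (hsum : Summable fun n : ℕ =>
      Xi μ A B γ k m ϑ lam (n + 2) * ‖(a (n + 2))‖)
    (hle : (∑' n : ℕ, Xi μ A B γ k m ϑ lam (n + 2) * ‖(a (n + 2))‖)
      ≤ (A - B) * (1 - γ)) :
    (∀ z : ℂ, ‖z‖ < 1 →
      ((Summable fun n : ℕ =>
        ‖(a (n + 2) * z ^ ((μ * (n + 2 : ℕ) : ℝ) : ℂ))‖) ∧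
      (Summable fun n : ℕ =>
        ‖((((μ * (n + 2 : ℕ)) ^ k * ϑ (n + 2) : ℝ) : ℂ) * a (n + 2) *
          z ^ ((μ * (n + 2 : ℕ) : ℝ) : ℂ))‖) ∧
      (Summable fun n : ℕ =>
        ‖((((μ * (n + 2 : ℕ)) ^ m * lam (n + 2) : ℝ) : ℂ) * a (n + 2) *
          z ^ ((μ * (n + 2 : ℕ) : ℝ) : ℂ))‖))) ∧
    (∀ z : ℂ, ‖z‖ < 1 → z ≠ 0 →
      ‖(pser μ (fun n => (((μ * n) ^ k * ϑ n : ℝ) : ℂ) * a n) z -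
          pser μ (fun n => (((μ * n) ^ m * lam n : ℝ) : ℂ) * a n) z)‖ <
      ‖((((A - B) * (1 - γ) : ℝ) : ℂ) *
            pser μ (fun n => (((μ * n) ^ m * lam n : ℝ) : ℂ) * a n) z -
          ((B : ℝ) : ℂ) *
            (pser μ (fun n => (((μ * n) ^ k * ϑ n : ℝ) : ℂ) * a n) z -
              pser μ (fun n => (((μ * n) ^ m * lam n : ℝ) : ℂ) * a n) z))‖) := by
  set C : ℝ := (A - B) * (1 - γ) with hCdef
  have hC : 0 < C := mul_pos (by linarith) (by linarith)
  set tk : ℕ → ℝ := fun n => (μ * ((n + 2 : ℕ) : ℝ)) ^ k * ϑ (n + 2) with htkdef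
  set tm : ℕ → ℝ := fun n => (μ * ((n + 2 : ℕ) : ℝ)) ^ m * lam (n + 2) with htmdef
  have hbase : ∀ n : ℕ, (2 : ℝ) ≤ μ * ((n + 2 : ℕ) : ℝ) := by
    intro n
    have h2 : (2 : ℝ) ≤ ((n + 2 : ℕ) : ℝ) := by exact_mod_cast Nat.le_add_left 2 n
    nlinarith
  have hbase1 : ∀ n : ℕ, (1 : ℝ) ≤ μ * ((n + 2 : ℕ) : ℝ) := fun n => by linarith [hbase n]
  have htm0 : ∀ n, 0 ≤ tm n := fun n =>
    mul_nonneg (pow_nonneg (by linarith [hbase1 n]) m) (hlam (n + 2) (Nat.le_add_left 2 n))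
  have htmtk : ∀ n, tm n ≤ tk n := fun n =>
    mul_le_mul (pow_le_pow_right₀ (hbase1 n) hkm) (hϑ (n + 2) (Nat.le_add_left 2 n))
      (hlam (n + 2) (Nat.le_add_left 2 n)) (pow_nonneg (by linarith [hbase1 n]) k)
  have htk0 : ∀ n, 0 ≤ tk n := fun n => le_trans (htm0 n) (htmtk n)
  have hXi : ∀ n, Xi μ A B γ k m ϑ lam (n + 2) = (1 - B) * (tk n - tm n) + C * tm n := by
    intro n; simp [Xi, htkdef, htmdef, hCdef]
  have hXige : ∀ n, C * tk n ≤ Xi μ A B γ k m ϑ lam (n + 2) := by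
    intro n
    rw [hXi n]
    have h1 : C ≤ 1 - B := by nlinarith
    nlinarith [htmtk n, htm0 n]
  have hXi0 : ∀ n, 0 ≤ Xi μ A B γ k m ϑ lam (n + 2) := fun n =>
    le_trans (mul_nonneg hC.le (htk0 n)) (hXige n)
  have habs0 : ∀ n, (0 : ℝ) ≤ ‖a (n + 2)‖ := fun n => norm_nonneg _
  -- summability of `tk * |a|` and `tm * |a|`
  have hTk : Summable fun n => tk n * ‖a (n + 2)‖ := by
    refine Summable.of_nonneg_of_le (fun n => mul_nonneg (htk0 n) (habs0 n))
      (fun n => ?_) (hsum.mul_left C⁻¹)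
    have h1 : C * (tk n * ‖a (n + 2)‖) ≤
        Xi μ A B γ k m ϑ lam (n + 2) * ‖a (n + 2)‖ := by
      rw [← mul_assoc]; exact mul_le_mul_of_nonneg_right (hXige n) (habs0 n)
    have h2 := mul_le_mul_of_nonneg_left h1 (inv_nonneg.2 hC.le)
    rwa [← mul_assoc, inv_mul_cancel₀ hC.ne', one_mul] at h2
  have hTm : Summable fun n => tm n * ‖a (n + 2)‖ :=
    Summable.of_nonneg_of_le (fun n => mul_nonneg (htm0 n) (habs0 n))
      (fun n => mul_le_mul_of_nonneg_right (htmtk n) (habs0 n)) hTk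
  -- termwise absolute values
  have habsw : ∀ (z : ℂ) (n : ℕ),
      ‖z ^ ((μ * (n + 2 : ℕ) : ℝ) : ℂ)‖ =
        ‖z‖ ^ (μ * ((n + 2 : ℕ) : ℝ)) := fun z n => Complex.norm_cpow_real z _
  have hkey : ∀ (x : ℕ → ℝ), (∀ n, 0 ≤ x n) → ∀ (z : ℂ) (n : ℕ),
      ‖((x n : ℝ) : ℂ) * a (n + 2) * z ^ ((μ * (n + 2 : ℕ) : ℝ) : ℂ)‖ =
        x n * (‖a (n + 2)‖ * ‖z‖ ^ (μ * ((n + 2 : ℕ) : ℝ))) := by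
    intro x hx z n
    rw [norm_mul, norm_mul, Complex.norm_real, Real.norm_of_nonneg (hx n), habsw, mul_assoc]
  have hp1 : ∀ (z : ℂ), ‖z‖ < 1 → ∀ n : ℕ,
      ‖z‖ ^ (μ * ((n + 2 : ℕ) : ℝ)) ≤ 1 := fun z hz n =>
    Real.rpow_le_one (norm_nonneg _) hz.le (by linarith [hbase n])
  have hp0 : ∀ (z : ℂ) (n : ℕ), (0:ℝ) ≤ ‖z‖ ^ (μ * ((n + 2 : ℕ) : ℝ)) :=
    fun z n => Real.rpow_nonneg (norm_nonneg _) _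
  -- part 1
  have part1 : ∀ z : ℂ, ‖z‖ < 1 →
      ((Summable fun n : ℕ =>
        ‖a (n + 2) * z ^ ((μ * (n + 2 : ℕ) : ℝ) : ℂ)‖) ∧
      (Summable fun n : ℕ =>
        ‖(((μ * (n + 2 : ℕ)) ^ k * ϑ (n + 2) : ℝ) : ℂ) * a (n + 2) *
          z ^ ((μ * (n + 2 : ℕ) : ℝ) : ℂ)‖) ∧
      (Summable fun n : ℕ =>
        ‖(((μ * (n + 2 : ℕ)) ^ m * lam (n + 2) : ℝ) : ℂ) * a (n + 2) *
          z ^ ((μ * (n + 2 : ℕ) : ℝ) : ℂ)‖)) := by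
    intro z hz
    refine ⟨?_, ?_, ?_⟩
    · have := hconv (‖z‖) (norm_nonneg _) hz
      refine this.congr fun n => ?_
      rw [norm_mul, habsw]
    · refine Summable.of_nonneg_of_le (fun n => norm_nonneg _) (fun n => ?_) hTk
      rw [hkey tk htk0 z n]
      nlinarith [hp1 z hz n, hp0 z n, habs0 n, htk0 n,
        mul_nonneg (htk0 n) (habs0 n)]
    · refine Summable.of_nonneg_of_le (fun n => norm_nonneg _) (fun n => ?_) hTm
      rw [hkey tm htm0 z n]
      nlinarith [hp1 z hz n, hp0 z n, habs0 n, htm0 n,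
        mul_nonneg (htm0 n) (habs0 n)]
  refine ⟨part1, ?_⟩
  intro z hz hz0
  obtain ⟨sa, sk', sm'⟩ := part1 z hz
  set r : ℝ := ‖z‖ with hrdef
  have hr0 : 0 < r := norm_pos_iff.2 hz0
  set w : ℕ → ℂ := fun n => z ^ ((μ * (n + 2 : ℕ) : ℝ) : ℂ) with hwdef
  set p : ℕ → ℝ := fun n => r ^ (μ * ((n + 2 : ℕ) : ℝ)) with hpdef
  -- complex summability
  have sk : Summable fun n => ((tk n : ℝ) : ℂ) * a (n + 2) * w n := Summable.of_norm sk'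
  have sm : Summable fun n => ((tm n : ℝ) : ℂ) * a (n + 2) * w n := Summable.of_norm sm'
  -- real summable series with p
  have hp1' : ∀ n : ℕ, p n ≤ 1 := fun n => hp1 z hz n
  have hp0' : ∀ n : ℕ, (0:ℝ) ≤ p n := fun n => hp0 z n
  have hple : ∀ n, p n ≤ r ^ (2 * μ) := fun n =>
    Real.rpow_le_rpow_of_exponent_ge hr0 hz.le (by
      have h2 : (2 : ℝ) ≤ ((n + 2 : ℕ) : ℝ) := by exact_mod_cast Nat.le_add_left 2 n
      nlinarith)
  have u1 : Summable fun n => (tk n - tm n) * (‖a (n + 2)‖ * p n) := by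
    refine Summable.of_nonneg_of_le
      (fun n => mul_nonneg (by linarith [htmtk n]) (mul_nonneg (habs0 n) (hp0 z n)))
      (fun n => ?_) hTk
    nlinarith [mul_nonneg (htm0 n) (mul_nonneg (habs0 n) (hp0' n)),
      mul_nonneg (mul_nonneg (htk0 n) (habs0 n)) (sub_nonneg.2 (hp1' n))]
  have hco0 : ∀ n, (0:ℝ) ≤ C * tm n - B * (tk n - tm n) := fun n => by
    have h1 := mul_nonneg hC.le (htm0 n)
    have h2 := mul_nonneg (neg_nonneg.2 hB0.le) (sub_nonneg.2 (htmtk n))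
    nlinarith
  have hco : ∀ n, C * tm n - B * (tk n - tm n) ≤ Xi μ A B γ k m ϑ lam (n + 2) := fun n => by
    rw [hXi n]; nlinarith [htmtk n]
  have u2 : Summable fun n => (C * tm n - B * (tk n - tm n)) *
      (‖a (n + 2)‖ * p n) := by
    refine Summable.of_nonneg_of_le
      (fun n => mul_nonneg (hco0 n) (mul_nonneg (habs0 n) (hp0' n)))
      (fun n => ?_) hsum
    nlinarith [mul_nonneg (mul_nonneg (hXi0 n) (habs0 n)) (sub_nonneg.2 (hp1' n)),
      mul_nonneg (sub_nonneg.2 (hco n)) (mul_nonneg (habs0 n) (hp0' n))]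
  -- tsum identities
  have hGH : pser μ (fun n => (((μ * n) ^ k * ϑ n : ℝ) : ℂ) * a n) z -
      pser μ (fun n => (((μ * n) ^ m * lam n : ℝ) : ℂ) * a n) z =
      ∑' n : ℕ, ((tk n - tm n : ℝ) : ℂ) * a (n + 2) * w n := by
    simp only [pser]
    rw [add_sub_add_left_eq_sub, ← Summable.tsum_sub sk sm]
    refine tsum_congr fun n => ?_
    push_cast
    ring
  have hT : ((C : ℝ) : ℂ) * pser μ (fun n => (((μ * n) ^ m * lam n : ℝ) : ℂ) * a n) z -
      ((B : ℝ) : ℂ) * (pser μ (fun n => (((μ * n) ^ k * ϑ n : ℝ) : ℂ) * a n) z -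
        pser μ (fun n => (((μ * n) ^ m * lam n : ℝ) : ℂ) * a n) z) =
      ((C : ℝ) : ℂ) * z +
        ∑' n : ℕ, ((C * tm n - B * (tk n - tm n) : ℝ) : ℂ) * a (n + 2) * w n := by
    have sd : Summable fun n => ((tk n - tm n : ℝ) : ℂ) * a (n + 2) * w n :=
      (sk.sub sm).congr fun n => by push_cast; ring
    have hsplit : (∑' n : ℕ, ((C * tm n - B * (tk n - tm n) : ℝ) : ℂ) * a (n + 2) * w n)
        = ((C : ℝ) : ℂ) * (∑' n : ℕ, ((tm n : ℝ) : ℂ) * a (n + 2) * w n) -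
          ((B : ℝ) : ℂ) * (∑' n : ℕ, ((tk n - tm n : ℝ) : ℂ) * a (n + 2) * w n) := by
      rw [← tsum_mul_left (a := ((C : ℝ) : ℂ)), ← tsum_mul_left (a := ((B : ℝ) : ℂ)),
        ← Summable.tsum_sub (sm.mul_left ((C:ℝ):ℂ)) (sd.mul_left ((B:ℝ):ℂ))]
      refine tsum_congr fun n => ?_
      push_cast
      ring
    rw [hGH]
    simp only [pser]
    rw [hsplit]
    ring
  -- bounds
  have hnorm1 : ∀ n, ‖((tk n - tm n : ℝ) : ℂ) * a (n + 2) * w n‖ =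
      (tk n - tm n) * (‖a (n + 2)‖ * p n) :=
    fun n => hkey (fun n => tk n - tm n) (fun n => sub_nonneg.2 (htmtk n)) z n
  have hnorm2 : ∀ n, ‖((C * tm n - B * (tk n - tm n) : ℝ) : ℂ) * a (n + 2) * w n‖ =
      (C * tm n - B * (tk n - tm n)) * (‖a (n + 2)‖ * p n) :=
    fun n => hkey (fun n => C * tm n - B * (tk n - tm n)) hco0 z n
  set s1 : ℝ := ∑' n : ℕ, (tk n - tm n) * (‖a (n + 2)‖ * p n) with hs1def
  set s2 : ℝ := ∑' n : ℕ, (C * tm n - B * (tk n - tm n)) *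
      (‖a (n + 2)‖ * p n) with hs2def
  have hb1 : ‖∑' n : ℕ, ((tk n - tm n : ℝ) : ℂ) * a (n + 2) * w n‖ ≤ s1 := by
    refine (norm_tsum_le_tsum_norm ?_).trans_eq (tsum_congr fun n => by
      rw [hnorm1 n])
    exact u1.congr fun n => by rw [hnorm1 n]
  have hb2 : ‖∑' n : ℕ, ((C * tm n - B * (tk n - tm n) : ℝ) : ℂ) *
      a (n + 2) * w n‖ ≤ s2 := by
    refine (norm_tsum_le_tsum_norm ?_).trans_eq (tsum_congr fun n => by
      rw [hnorm2 n])
    exact u2.congr fun n => by rw [hnorm2 n]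
  -- key strict inequality: s1 + s2 < C * r
  have hsum_p : Summable fun n => Xi μ A B γ k m ϑ lam (n + 2) *
      ‖a (n + 2)‖ * p n := by
    refine Summable.of_nonneg_of_le
      (fun n => mul_nonneg (mul_nonneg (hXi0 n) (habs0 n)) (hp0' n)) (fun n => ?_) hsum
    nlinarith [mul_nonneg (mul_nonneg (hXi0 n) (habs0 n)) (sub_nonneg.2 (hp1' n))]
  have hs1s2 : s1 + s2 = ∑' n : ℕ, Xi μ A B γ k m ϑ lam (n + 2) *
      ‖a (n + 2)‖ * p n := by
    rw [hs1def, hs2def, ← Summable.tsum_add u1 u2]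
    refine tsum_congr fun n => ?_
    rw [hXi n]; ring
  have hstrict : s1 + s2 < C * r := by
    rw [hs1s2]
    have step1 : (∑' n : ℕ, Xi μ A B γ k m ϑ lam (n + 2) * ‖a (n + 2)‖ * p n)
        ≤ (∑' n : ℕ, Xi μ A B γ k m ϑ lam (n + 2) * ‖a (n + 2)‖) * r ^ (2 * μ) := by
      rw [← tsum_mul_right]
      refine Summable.tsum_le_tsum (fun n => ?_) hsum_p (hsum.mul_right _)
      exact mul_le_mul_of_nonneg_left (hple n) (mul_nonneg (hXi0 n) (habs0 n))
    have step2 : (∑' n : ℕ, Xi μ A B γ k m ϑ lam (n + 2) * ‖a (n + 2)‖) *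
        r ^ (2 * μ) ≤ C * r ^ (2 * μ) :=
      mul_le_mul_of_nonneg_right hle (Real.rpow_nonneg hr0.le _)
    have step3 : C * r ^ (2 * μ) < C * r := by
      refine mul_lt_mul_of_pos_left ?_ hC
      have := Real.rpow_lt_rpow_of_exponent_gt hr0 hz (by linarith : (1:ℝ) < 2 * μ)
      rwa [Real.rpow_one] at this
    linarith
  -- conclude
  rw [hT, hGH]
  have habsCz : ‖((C : ℝ) : ℂ) * z‖ = C * r := by
    rw [norm_mul, Complex.norm_real, Real.norm_of_nonneg hC.le]
  set T : ℂ := ∑' n : ℕ, ((C * tm n - B * (tk n - tm n) : ℝ) : ℂ) * a (n + 2) * w n with hTdef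
  have htri : C * r - s2 ≤ ‖((C : ℝ) : ℂ) * z + T‖ := by
    have h := norm_add_le (((C : ℝ) : ℂ) * z + T) (-T)
    simp only [add_neg_cancel_right, norm_neg] at h
    rw [habsCz] at h
    linarith [hb2]
  calc ‖∑' n : ℕ, ((tk n - tm n : ℝ) : ℂ) * a (n + 2) * w n‖
      ≤ s1 := hb1
    _ < C * r - s2 := by linarith
    _ ≤ ‖((C : ℝ) : ℂ) * z + T‖ := htri
end

section
/- F_μ belongs to the class Ẽ if and only if the series Σ_{n=2}^∞ aₙ r^{μn} converges for every 0 ≤ r < 1 and Σ_{n=2}^∞ Ξ(n)·aₙ ≤ (A−B)(1−γ) (in particular, this sum of nonnegative terms is finite). -/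
set_option maxHeartbeats 1000000

open Complex Topology Filter



open Complex

/-- `Gneg μ j c a z = z − Σ_{n≥2} (μn)^j cₙ aₙ z^{μn}` (principal powers).
With `j = k, c = ϑ` this is `D_μ^k(F_μ∗Φ_μ)(z)`; with `j = m, c = λ` it is
`D_μ^m(F_μ∗Ψ_μ)(z)`. -/
noncomputable def Gneg (μ : ℝ) (j : ℕ) (c a : ℕ → ℝ) (z : ℂ) : ℂ :=
  z - ∑' n : ℕ, (((μ * (n + 2 : ℕ)) ^ j * c (n + 2) * a (n + 2) : ℝ) : ℂ) *
    z ^ ((μ * (n + 2 : ℕ) : ℝ) : ℂ)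

/-- `Fneg μ a z = z − Σ_{n≥2} aₙ z^{μn}` (principal powers). -/
noncomputable def Fneg (μ : ℝ) (a : ℕ → ℝ) (z : ℂ) : ℂ :=
  z - ∑' n : ℕ, (a (n + 2) : ℂ) * z ^ ((μ * (n + 2 : ℕ) : ℝ) : ℂ)

/-- Membership of `F_μ(z) = z − Σ_{n≥2} aₙ z^{μn}` in the class
`Ẽ_{k,m}(Φ_μ,Ψ_μ,A,B,μ,γ)`: the series for `F_μ`, `G = D_μ^k(F_μ∗Φ_μ)` and
`H = D_μ^m(F_μ∗Ψ_μ)` converge absolutely at every `z ∈ 𝕌`, and for every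
`z ∈ 𝕌 ∖ {0}` the subordination condition
`|G(z) − H(z)| < |(A−B)(1−γ)H(z) − B(G(z) − H(z))|` holds. -/
def memE (μ A B γ : ℝ) (k m : ℕ) (ϑ lam a : ℕ → ℝ) : Prop :=
  (∀ z : ℂ, (norm : ℂ → ℝ) z < 1 →
    ((Summable fun n : ℕ =>
      (norm : ℂ → ℝ) ((a (n + 2) : ℂ) * z ^ ((μ * (n + 2 : ℕ) : ℝ) : ℂ))) ∧
    (Summable fun n : ℕ =>
      (norm : ℂ → ℝ) ((((μ * (n + 2 : ℕ)) ^ k * ϑ (n + 2) * a (n + 2) : ℝ) : ℂ) *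
        z ^ ((μ * (n + 2 : ℕ) : ℝ) : ℂ))) ∧
    (Summable fun n : ℕ =>
      (norm : ℂ → ℝ) ((((μ * (n + 2 : ℕ)) ^ m * lam (n + 2) * a (n + 2) : ℝ) : ℂ) *
        z ^ ((μ * (n + 2 : ℕ) : ℝ) : ℂ))))) ∧
  (∀ z : ℂ, (norm : ℂ → ℝ) z < 1 → z ≠ 0 →
    (norm : ℂ → ℝ) (Gneg μ k ϑ a z - Gneg μ m lam a z) <
    (norm : ℂ → ℝ) ((((A - B) * (1 - γ) : ℝ) : ℂ) * Gneg μ m lam a z -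
      ((B : ℝ) : ℂ) * (Gneg μ k ϑ a z - Gneg μ m lam a z)))

noncomputable def TT (μ : ℝ) (j : ℕ) (c a : ℕ → ℝ) (n : ℕ) : ℝ :=
  (μ * (n + 2 : ℕ)) ^ j * c (n + 2) * a (n + 2)
noncomputable def ce (μ : ℝ) (n : ℕ) : ℝ := μ * (n + 2 : ℕ)

lemma ce2 {μ : ℝ} (hμ : 1 ≤ μ) (n : ℕ) : 2 ≤ ce μ n ∧ 2 * μ ≤ ce μ n := by
  have h2 : (2:ℝ) ≤ ((n + 2 : ℕ) : ℝ) := by push_cast; linarith [Nat.cast_nonneg (α := ℝ) n]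
  constructor <;> (unfold ce; nlinarith)

lemma pos_of_ivt {f : ℝ → ℝ} (hc : Continuous f) {ε r : ℝ} (hεr : ε ≤ r) (hpos : 0 < f ε)
    (hne : ∀ x ∈ Set.Icc ε r, f x ≠ 0) : 0 < f r := by
  by_contra h
  push_neg at h
  obtain ⟨x, hx, hfx⟩ := intermediate_value_Icc' hεr hc.continuousOn
    (⟨h, hpos.le⟩ : (0:ℝ) ∈ Set.Icc (f r) (f ε))
  exact hne x hx hfx

lemma cont_tsum_min {f : ℕ → ℝ} (hf : ∀ n, 0 ≤ f n) {c : ℕ → ℝ} (hc : ∀ n, 0 < c n)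
    {ρ : ℝ} (hρ : 0 ≤ ρ) (hs : Summable fun n => f n * ρ ^ c n) :
    Continuous fun r : ℝ => ∑' n, f n * (min |r| ρ) ^ c n := by
  apply continuous_tsum ?_ hs ?_
  · intro n
    have hr : Continuous fun x : ℝ => x ^ c n :=
      continuous_iff_continuousAt.2 fun x => Real.continuousAt_rpow_const x _ (Or.inr (hc n).le)
    exact continuous_const.mul (hr.comp (continuous_abs.min continuous_const))
  · intro n x
    rw [Real.norm_eq_abs,
      _root_.abs_of_nonneg (mul_nonneg (hf n) (Real.rpow_nonneg (le_min (abs_nonneg _) hρ) _))]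
    exact mul_le_mul_of_nonneg_left
      (Real.rpow_le_rpow (le_min (abs_nonneg _) hρ) (min_le_right _ _) (hc n).le) (hf n)

lemma forward_core (μ P : ℝ) (X : ℕ → ℝ) (hμ : 1 ≤ μ) (hP : 0 < P)
    (hX0 : ∀ n, 0 ≤ X n)
    (hsumX : ∀ r : ℝ, 0 < r → r < 1 → Summable (fun n => X n * r ^ ce μ n))
    (hkey : ∀ r : ℝ, 0 < r → r < 1 → P * r ≠ ∑' n, X n * r ^ ce μ n) :
    Summable X ∧ ∑' n, X n ≤ P := by
  have hcpos : ∀ n, 0 < ce μ n := fun n => by linarith [(ce2 hμ n).1]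
  have main : ∀ ρ : ℝ, 0 < ρ → ρ < 1 → ∑' n, X n * ρ ^ ce μ n < P * ρ := by
    intro ρ hρ0 hρ1
    set F : ℝ → ℝ := fun r => ∑' n, X n * (min |r| ρ) ^ ce μ n with hF
    have hFc : Continuous F := cont_tsum_min hX0 hcpos hρ0.le (hsumX ρ hρ0 hρ1)
    have hFeq : ∀ r : ℝ, 0 ≤ r → r ≤ ρ → F r = ∑' n, X n * r ^ ce μ n := by
      intro r h0 h1
      simp only [hF, _root_.abs_of_nonneg h0, min_eq_left h1]
    set C := ∑' n, X n * ρ ^ (ce μ n - 2) with hC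
    have hCsum : Summable (fun n => X n * ρ ^ (ce μ n - 2)) := by
      apply ((hsumX ρ hρ0 hρ1).mul_right ((ρ ^ (2:ℝ))⁻¹)).congr
      intro n
      rw [Real.rpow_sub hρ0, div_eq_mul_inv]
      ring
    have hC0 : 0 ≤ C :=
      tsum_nonneg fun n => mul_nonneg (hX0 n) (Real.rpow_nonneg hρ0.le _)
    set ε := min ρ (P / (C + 1)) with hε
    have hε0 : 0 < ε := lt_min hρ0 (div_pos hP (by linarith))
    have hερ : ε ≤ ρ := min_le_left _ _
    have hε1 : ε < 1 := lt_of_le_of_lt hερ hρ1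
    have hεC : ε * C < P := by
      have h1 : ε * C ≤ (P / (C + 1)) * C :=
        mul_le_mul_of_nonneg_right (min_le_right _ _) hC0
      have h2 : (P / (C + 1)) * C < P := by
        rw [div_mul_eq_mul_div, div_lt_iff₀ (by linarith : (0:ℝ) < C + 1)]
        nlinarith
      linarith
    have hε2 : ε ^ (2:ℝ) = ε * ε := by
      rw [show (2:ℝ) = ((2:ℕ):ℝ) by norm_num, Real.rpow_natCast]
      ring
    have hFε : 0 < P * ε - F ε := by
      rw [hFeq ε hε0.le hερ]
      have bound : ∀ n, X n * ε ^ ce μ n ≤ (X n * ρ ^ (ce μ n - 2)) * ε ^ (2:ℝ) := by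
        intro n
        have e0 : (2:ℝ) + (ce μ n - 2) = ce μ n := by ring
        have e1 : ε ^ ce μ n = ε ^ (2:ℝ) * ε ^ (ce μ n - 2) := by
          rw [← Real.rpow_add hε0, e0]
        have e2 : ε ^ (ce μ n - 2) ≤ ρ ^ (ce μ n - 2) :=
          Real.rpow_le_rpow hε0.le hερ (by linarith [(ce2 hμ n).1])
        rw [e1]
        have h3 : (0:ℝ) ≤ ε ^ (2:ℝ) := Real.rpow_nonneg hε0.le _
        nlinarith [hX0 n, mul_nonneg (hX0 n) h3]
      have hsum2 : ∑' n, X n * ε ^ ce μ n ≤ C * ε ^ (2:ℝ) := by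
        rw [hC, ← tsum_mul_right]
        exact Summable.tsum_le_tsum bound (hsumX ε hε0 hε1) (hCsum.mul_right _)
      have : C * ε ^ (2:ℝ) < P * ε := by
        rw [hε2]; nlinarith
      linarith
    have hφ : 0 < P * ρ - F ρ := by
      have hcont : Continuous fun x : ℝ => P * x - F x :=
        (continuous_const.mul continuous_id).sub hFc
      refine pos_of_ivt hcont hερ hFε ?_
      intro x hx
      have hx0 : 0 < x := lt_of_lt_of_le hε0 hx.1
      have hx1 : x < 1 := lt_of_le_of_lt hx.2 hρ1
      rw [hFeq x hx0.le hx.2]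
      intro h
      exact hkey x hx0 hx1 (by linarith)
    rw [hFeq ρ hρ0.le le_rfl] at hφ
    linarith
  have hpart : ∀ N : ℕ, ∑ i ∈ Finset.range N, X i ≤ P := by
    intro N
    have hev : ∀ᶠ r in 𝓝[<] (1:ℝ), ∑ i ∈ Finset.range N, X i * r ^ ce μ i ≤ P := by
      filter_upwards [Ioo_mem_nhdsLT_of_mem (show (1:ℝ) ∈ Set.Ioc 0 1 by norm_num)] with r hr
      calc ∑ i ∈ Finset.range N, X i * r ^ ce μ i
          ≤ ∑' i, X i * r ^ ce μ i :=
            Summable.sum_le_tsum _ (fun i _ => mul_nonneg (hX0 i) (Real.rpow_nonneg hr.1.le _))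
              (hsumX r hr.1 hr.2)
        _ ≤ P := by nlinarith [main r hr.1 hr.2, hr.2]
    have htend : Tendsto (fun r : ℝ => ∑ i ∈ Finset.range N, X i * r ^ ce μ i)
        (𝓝[<] (1:ℝ)) (𝓝 (∑ i ∈ Finset.range N, X i)) := by
      apply tendsto_finset_sum
      intro i _
      have hc : ContinuousAt (fun r : ℝ => r ^ ce μ i) 1 :=
        Real.continuousAt_rpow_const 1 _ (Or.inl one_ne_zero)
      have h2 : Tendsto (fun r : ℝ => r ^ ce μ i) (𝓝[<] (1:ℝ)) (𝓝 ((1:ℝ) ^ ce μ i)) :=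
        hc.tendsto.mono_left nhdsWithin_le_nhds
      have h3 := h2.const_mul (X i)
      simpa [Real.one_rpow] using h3
    exact le_of_tendsto htend hev
  exact ⟨summable_of_sum_range_le hX0 hpart, Summable.tsum_le_of_sum_range_le
    (summable_of_sum_range_le hX0 hpart) hpart⟩

lemma abs_term (μ x : ℝ) (n : ℕ) (z : ℂ) :
    (norm : ℂ → ℝ) ((x : ℂ) * z ^ ((ce μ n : ℝ) : ℂ)) = |x| * (norm : ℂ → ℝ) z ^ ce μ n := by
  rw [norm_mul, Complex.norm_real, Real.norm_eq_abs, Complex.norm_cpow_real]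

lemma Gneg_real (μ : ℝ) (j : ℕ) (c a : ℕ → ℝ) {r : ℝ} (hr : 0 ≤ r) :
    Gneg μ j c a (r : ℂ) = ((r - ∑' n : ℕ, TT μ j c a n * r ^ ce μ n : ℝ) : ℂ) := by
  rw [ofReal_sub, ofReal_tsum]
  unfold Gneg
  congr 1
  refine tsum_congr fun n => ?_
  rw [TT, ce]
  push_cast [ofReal_cpow hr]
  ring

lemma tsum_combo {T S w : ℕ → ℝ} (hT : Summable (fun n => T n * w n))
    (hS : Summable (fun n => S n * w n)) (B P : ℝ) :
    ∑' n, ((1 - B) * (T n - S n) + P * S n) * w n =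
      (1 - B) * ((∑' n, T n * w n) - ∑' n, S n * w n) + P * ∑' n, S n * w n := by
  have h1 : Summable (fun n => (1 - B) * (T n * w n - S n * w n)) := ((hT.sub hS).mul_left _)
  have h2 : Summable (fun n => P * (S n * w n)) := hS.mul_left _
  calc ∑' n, ((1 - B) * (T n - S n) + P * S n) * w n
      = ∑' n, ((1 - B) * (T n * w n - S n * w n) + P * (S n * w n)) :=
        tsum_congr fun n => by ring
    _ = (1 - B) * (∑' n, (T n * w n - S n * w n)) + P * ∑' n, S n * w n := by
        rw [Summable.tsum_add h1 h2, tsum_mul_left, tsum_mul_left]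
    _ = (1 - B) * ((∑' n, T n * w n) - ∑' n, S n * w n) + P * ∑' n, S n * w n := by
        rw [Summable.tsum_sub hT hS]

section facts
variable (μ A B γ : ℝ) (k m : ℕ) (a ϑ lam : ℕ → ℝ)
    (hμ : 1 ≤ μ) (hkm : m ≤ k)
    (hB : -1 ≤ B) (hBA : B < A) (hA : A ≤ 1) (hB0 : B < 0)
    (hγ0 : 0 ≤ γ) (hγ1 : γ < 1)
    (ha : ∀ n, 2 ≤ n → 0 ≤ a n)
    (hlam : ∀ n, 2 ≤ n → 0 ≤ lam n) (hϑ : ∀ n, 2 ≤ n → lam n ≤ ϑ n)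

include hμ hkm hB hBA hA hB0 hγ0 hγ1 ha hlam hϑ

lemma hST (n : ℕ) : 0 ≤ TT μ m lam a n ∧ TT μ m lam a n ≤ TT μ k ϑ a n := by
  have h2 : 2 ≤ ce μ n := by
    have h2 : (2:ℝ) ≤ ((n + 2 : ℕ) : ℝ) := by push_cast; linarith [Nat.cast_nonneg (α := ℝ) n]
    have := Nat.cast_nonneg (α := ℝ) n
    unfold ce; nlinarith
  rw [ce] at h2
  have hb : (1:ℝ) ≤ μ * ((n + 2 : ℕ) : ℝ) := by linarith
  have hpow : (μ * ((n + 2 : ℕ):ℝ)) ^ m ≤ (μ * ((n + 2 : ℕ):ℝ)) ^ k := pow_le_pow_right₀ hb hkm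
  have hpm : (0:ℝ) ≤ (μ * ((n + 2 : ℕ):ℝ)) ^ m := by positivity
  have hl := hlam (n+2) (by omega)
  have hth := hϑ (n+2) (by omega)
  have han := ha (n+2) (by omega)
  constructor
  · unfold TT; positivity
  · unfold TT
    nlinarith [mul_le_mul_of_nonneg_right hpow (mul_nonneg hl han),
      mul_le_mul_of_nonneg_right (mul_le_mul_of_nonneg_left hth (le_trans hpm hpow)) han]

lemma hXiEq (n : ℕ) : Xi μ A B γ k m ϑ lam (n+2) * a (n+2) =
    (1 - B) * (TT μ k ϑ a n - TT μ m lam a n) + ((A-B)*(1-γ)) * TT μ m lam a n := by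
  simp only [Xi, TT]; push_cast; ring

lemma hXi0 (n : ℕ) : 0 ≤ Xi μ A B γ k m ϑ lam (n+2) * a (n+2) := by
  rw [hXiEq μ A B γ k m a ϑ lam hμ hkm hB hBA hA hB0 hγ0 hγ1 ha hlam hϑ]
  obtain ⟨h1, h2⟩ := hST μ A B γ k m a ϑ lam hμ hkm hB hBA hA hB0 hγ0 hγ1 ha hlam hϑ n
  nlinarith [mul_nonneg (by linarith : (0:ℝ) ≤ 1 - B)
      (by linarith : 0 ≤ TT μ k ϑ a n - TT μ m lam a n),
    mul_nonneg (mul_nonneg (by linarith : (0:ℝ) ≤ A - B) (by linarith : (0:ℝ) ≤ 1 - γ)) h1]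

lemma hXi_ge (n : ℕ) : ((A-B)*(1-γ)) * TT μ k ϑ a n ≤ Xi μ A B γ k m ϑ lam (n+2) * a (n+2) := by
  rw [hXiEq μ A B γ k m a ϑ lam hμ hkm hB hBA hA hB0 hγ0 hγ1 ha hlam hϑ]
  obtain ⟨h1, h2⟩ := hST μ A B γ k m a ϑ lam hμ hkm hB hBA hA hB0 hγ0 hγ1 ha hlam hϑ n
  have hP1B : (A-B)*(1-γ) ≤ 1 - B := by nlinarith
  nlinarith [mul_le_mul_of_nonneg_right hP1B (by linarith : 0 ≤ TT μ k ϑ a n - TT μ m lam a n)]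
end facts

-- the backward subordination core, abstracted over sequences T S with the key facts
lemma backward_core (μ B P : ℝ) (k m : ℕ) (ϑ lam a : ℕ → ℝ) (X : ℕ → ℝ)
    (hμ : 1 ≤ μ) (hP : 0 < P) (hB0 : B < 0)
    (hST : ∀ n, 0 ≤ TT μ m lam a n ∧ TT μ m lam a n ≤ TT μ k ϑ a n)
    (hXiEq : ∀ n, X n = (1 - B) * (TT μ k ϑ a n - TT μ m lam a n) + P * TT μ m lam a n)
    (hXi0 : ∀ n, 0 ≤ X n)
    (hSXi : Summable X) (hXile : ∑' n, X n ≤ P)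
    (hTsum : Summable (TT μ k ϑ a))
    (hc2 : ∀ n, 2 * μ ≤ ce μ n)
    (z : ℂ) (hz : (norm : ℂ → ℝ) z < 1) (hz0 : z ≠ 0) :
    (norm : ℂ → ℝ) ((z - ∑' n : ℕ, ((TT μ k ϑ a n : ℝ) : ℂ) * z ^ ((ce μ n : ℝ) : ℂ)) -
        (z - ∑' n : ℕ, ((TT μ m lam a n : ℝ) : ℂ) * z ^ ((ce μ n : ℝ) : ℂ))) <
      (norm : ℂ → ℝ) ((P : ℂ) * (z - ∑' n : ℕ, ((TT μ m lam a n : ℝ) : ℂ) * z ^ ((ce μ n : ℝ) : ℂ)) -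
        (B : ℂ) * ((z - ∑' n : ℕ, ((TT μ k ϑ a n : ℝ) : ℂ) * z ^ ((ce μ n : ℝ) : ℂ)) -
          (z - ∑' n : ℕ, ((TT μ m lam a n : ℝ) : ℂ) * z ^ ((ce μ n : ℝ) : ℂ)))) := by
  set T := TT μ k ϑ a with hT
  set S := TT μ m lam a with hS
  set w : ℕ → ℂ := fun n => z ^ ((ce μ n : ℝ) : ℂ) with hw
  set r := (norm : ℂ → ℝ) z with hr
  have hr0 : 0 < r := by
    simpa [hr] using (norm_pos_iff.2 hz0)
  have hSsum : Summable S := hTsum.of_nonneg_of_le (fun n => (hST n).1) (fun n => (hST n).2)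
  have hT0 : ∀ n, 0 ≤ T n := fun n => le_trans (hST n).1 (hST n).2
  have hrc1 : ∀ n, r ^ ce μ n ≤ 1 := fun n =>
    Real.rpow_le_one hr0.le hz.le (by nlinarith [hc2 n])
  have hrc0 : ∀ n, 0 ≤ r ^ ce μ n := fun n => Real.rpow_nonneg hr0.le _
  have sumTr : Summable (fun n => T n * r ^ ce μ n) :=
    hTsum.of_nonneg_of_le (fun n => mul_nonneg (hT0 n) (hrc0 n))
      (fun n => by nlinarith [hrc1 n, hrc0 n, hT0 n])
  have sumSr : Summable (fun n => S n * r ^ ce μ n) :=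
    sumTr.of_nonneg_of_le (fun n => mul_nonneg (hST n).1 (hrc0 n))
      (fun n => mul_le_mul_of_nonneg_right (hST n).2 (hrc0 n))
  have hnorm : ∀ (x : ℝ) n, ‖(x : ℂ) * w n‖ = |x| * r ^ ce μ n := by
    intro x n
    rw [norm_mul, Complex.norm_real, Real.norm_eq_abs, Complex.norm_cpow_real]
  have sumTc : Summable (fun n => (T n : ℂ) * w n) := by
    apply Summable.of_norm
    apply sumTr.congr
    intro n
    rw [hnorm, _root_.abs_of_nonneg (hT0 n)]
  have sumSc : Summable (fun n => (S n : ℂ) * w n) := by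
    apply Summable.of_norm
    apply sumSr.congr
    intro n
    rw [hnorm, _root_.abs_of_nonneg (hST n).1]
  have hDiff : (z - ∑' n, (T n : ℂ) * w n) - (z - ∑' n, (S n : ℂ) * w n) =
      -∑' n, ((T n - S n : ℝ) : ℂ) * w n := by
    have h1 : ∑' n, ((T n - S n : ℝ) : ℂ) * w n =
        (∑' n, (T n : ℂ) * w n) - ∑' n, (S n : ℂ) * w n := by
      rw [← Summable.tsum_sub sumTc sumSc]
      exact tsum_congr fun n => by push_cast; ring
    rw [h1]; ring
  have sumTSc : Summable (fun n => ((T n - S n : ℝ) : ℂ) * w n) := by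
    apply (sumTc.sub sumSc).congr
    intro n; push_cast; ring
  have hRHS : (P : ℂ) * (z - ∑' n, (S n : ℂ) * w n) -
      (B : ℂ) * ((z - ∑' n, (T n : ℂ) * w n) - (z - ∑' n, (S n : ℂ) * w n)) =
      (P : ℂ) * z - ∑' n, ((P * S n - B * (T n - S n) : ℝ) : ℂ) * w n := by
    rw [hDiff]
    have h1 : ∑' n, ((P * S n - B * (T n - S n) : ℝ) : ℂ) * w n =
        (∑' n, (P : ℂ) * ((S n : ℂ) * w n)) -
        ∑' n, (B : ℂ) * (((T n - S n : ℝ) : ℂ) * w n) := by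
      rw [← Summable.tsum_sub (sumSc.mul_left _) (sumTSc.mul_left _)]
      exact tsum_congr fun n => by push_cast; ring
    rw [h1, tsum_mul_left, tsum_mul_left]
    ring
  -- real sums
  have sumTSr : Summable (fun n => (T n - S n) * r ^ ce μ n) := by
    apply (sumTr.sub sumSr).congr
    intro n; ring
  have sumRr : Summable (fun n => (P * S n - B * (T n - S n)) * r ^ ce μ n) := by
    apply ((sumSr.mul_left P).sub (sumTSr.mul_left B)).congr
    intro n; ring
  have hL : (norm : ℂ → ℝ) ((z - ∑' n, (T n : ℂ) * w n) - (z - ∑' n, (S n : ℂ) * w n)) ≤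
      ∑' n, (T n - S n) * r ^ ce μ n := by
    rw [hDiff, norm_neg]
    calc ‖∑' n, ((T n - S n : ℝ) : ℂ) * w n‖ ≤ ∑' n, ‖((T n - S n : ℝ) : ℂ) * w n‖ :=
          norm_tsum_le_tsum_norm (sumTSc.norm)
      _ = ∑' n, (T n - S n) * r ^ ce μ n := tsum_congr fun n => by
          rw [hnorm, _root_.abs_of_nonneg (by linarith [(hST n).2] : (0:ℝ) ≤ T n - S n)]
  have hR : P * r - ∑' n, (P * S n - B * (T n - S n)) * r ^ ce μ n ≤
      (norm : ℂ → ℝ) ((P : ℂ) * (z - ∑' n, (S n : ℂ) * w n) -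
        (B : ℂ) * ((z - ∑' n, (T n : ℂ) * w n) - (z - ∑' n, (S n : ℂ) * w n))) := by
    rw [hRHS]
    have hnn : ∀ n, (0:ℝ) ≤ P * S n - B * (T n - S n) := fun n => by
      nlinarith [(hST n).1, (hST n).2, mul_nonneg hP.le (hST n).1]
    have hnormR : ∀ n, ‖((P * S n - B * (T n - S n) : ℝ) : ℂ) * w n‖ =
        (P * S n - B * (T n - S n)) * r ^ ce μ n := fun n => by
      rw [hnorm, _root_.abs_of_nonneg (hnn n)]
    have sumRcn : Summable (fun n => ‖((P * S n - B * (T n - S n) : ℝ) : ℂ) * w n‖) :=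
      sumRr.congr fun n => (hnormR n).symm
    have h2 : ‖∑' n, ((P * S n - B * (T n - S n) : ℝ) : ℂ) * w n‖ ≤
        ∑' n, (P * S n - B * (T n - S n)) * r ^ ce μ n := by
      calc ‖∑' n, ((P * S n - B * (T n - S n) : ℝ) : ℂ) * w n‖
          ≤ ∑' n, ‖((P * S n - B * (T n - S n) : ℝ) : ℂ) * w n‖ :=
            norm_tsum_le_tsum_norm sumRcn
        _ = ∑' n, (P * S n - B * (T n - S n)) * r ^ ce μ n := tsum_congr hnormR
    have h3 : ‖(P : ℂ) * z‖ = P * r := by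
      rw [norm_mul, Complex.norm_real, Real.norm_eq_abs,
        _root_.abs_of_pos hP]
    calc P * r - ∑' n, (P * S n - B * (T n - S n)) * r ^ ce μ n
        ≤ ‖(P : ℂ) * z‖ - ‖∑' n, ((P * S n - B * (T n - S n) : ℝ) : ℂ) * w n‖ := by
          rw [h3]; linarith
      _ ≤ _ := norm_sub_norm_le _ _
  have hKey : (∑' n, (T n - S n) * r ^ ce μ n) +
      (∑' n, (P * S n - B * (T n - S n)) * r ^ ce μ n) < P * r := by
    have hsum1 : (∑' n, (T n - S n) * r ^ ce μ n) +
        (∑' n, (P * S n - B * (T n - S n)) * r ^ ce μ n) =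
        ∑' n, X n * r ^ ce μ n := by
      rw [← Summable.tsum_add sumTSr sumRr]
      exact tsum_congr fun n => by rw [hXiEq n]; ring
    have hsumX : Summable (fun n => X n * r ^ ce μ n) := by
      rw [show (fun n => X n * r ^ ce μ n) = fun n => ((T n - S n) * r ^ ce μ n +
        (P * S n - B * (T n - S n)) * r ^ ce μ n) from funext fun n => by rw [hXiEq n]; ring]
      exact sumTSr.add sumRr
    have h2μ : (1:ℝ) < 2 * μ := by linarith
    have hrlt : r ^ (2 * μ) < r := by
      calc r ^ (2*μ) < r ^ (1:ℝ) := Real.rpow_lt_rpow_of_exponent_gt hr0 hz h2μ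
        _ = r := Real.rpow_one r
    have hstep : ∑' n, X n * r ^ ce μ n ≤ (∑' n, X n) * r ^ (2*μ) := by
      rw [← tsum_mul_right]
      apply Summable.tsum_le_tsum _ hsumX (hSXi.mul_right _)
      intro n
      exact mul_le_mul_of_nonneg_left
        (Real.rpow_le_rpow_of_exponent_ge hr0 hz.le (hc2 n)) (hXi0 n)
    have hfin : (∑' n, X n) * r ^ (2*μ) ≤ P * r ^ (2*μ) :=
      mul_le_mul_of_nonneg_right hXile (Real.rpow_nonneg hr0.le _)
    have : P * r ^ (2*μ) < P * r := by nlinarith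
    linarith [hsum1 ▸ (le_trans hstep hfin)]
  show (norm : ℂ → ℝ) ((z - ∑' n, (T n : ℂ) * w n) - (z - ∑' n, (S n : ℂ) * w n)) <
    (norm : ℂ → ℝ) ((P : ℂ) * (z - ∑' n, (S n : ℂ) * w n) -
      (B : ℂ) * ((z - ∑' n, (T n : ℂ) * w n) - (z - ∑' n, (S n : ℂ) * w n)))
  linarith [hL, hR, hKey]

/-- Theorem 2.2 of the paper: `F_μ ∈ Ẽ_{k,m}(Φ_μ,Ψ_μ,A,B,μ,γ)` if and
only if `Σ_{n≥2} aₙ r^{μn}` converges for every `0 ≤ r < 1` and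
`Σ_{n≥2} Ξ(n) aₙ ≤ (A−B)(1−γ)` (in particular this sum of nonnegative terms is finite). -/
theorem stmt1 (μ A B γ : ℝ) (k m : ℕ) (a ϑ lam : ℕ → ℝ)
    (hμ : 1 ≤ μ) (hkm : m ≤ k)
    (hB : -1 ≤ B) (hBA : B < A) (hA : A ≤ 1) (hB0 : B < 0)
    (hγ0 : 0 ≤ γ) (hγ1 : γ < 1)
    (ha : ∀ n, 2 ≤ n → 0 ≤ a n)
    (hlam : ∀ n, 2 ≤ n → 0 ≤ lam n) (hϑ : ∀ n, 2 ≤ n → lam n ≤ ϑ n) :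
    memE μ A B γ k m ϑ lam a ↔
      ((∀ r : ℝ, 0 ≤ r → r < 1 →
        Summable fun n : ℕ => a (n + 2) * r ^ (μ * (n + 2 : ℕ) : ℝ)) ∧
      (Summable fun n : ℕ => Xi μ A B γ k m ϑ lam (n + 2) * a (n + 2)) ∧
      (∑' n : ℕ, Xi μ A B γ k m ϑ lam (n + 2) * a (n + 2)) ≤ (A - B) * (1 - γ)) := by
  have hP : 0 < (A - B) * (1 - γ) := by nlinarith
  have hST' := fun n => hST μ A B γ k m a ϑ lam hμ hkm hB hBA hA hB0 hγ0 hγ1 ha hlam hϑ n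
  have hXiEq' := fun n => hXiEq μ A B γ k m a ϑ lam hμ hkm hB hBA hA hB0 hγ0 hγ1 ha hlam hϑ n
  have hXi0' := fun n => hXi0 μ A B γ k m a ϑ lam hμ hkm hB hBA hA hB0 hγ0 hγ1 ha hlam hϑ n
  have hXige := fun n => hXi_ge μ A B γ k m a ϑ lam hμ hkm hB hBA hA hB0 hγ0 hγ1 ha hlam hϑ n
  have hT0 : ∀ n, 0 ≤ TT μ k ϑ a n := fun n => le_trans (hST' n).1 (hST' n).2
  constructor
  · -- forward direction
    intro hmem
    obtain ⟨hsum, hsub⟩ := hmem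
    have hrsum : ∀ r : ℝ, 0 ≤ r → r < 1 →
        (Summable fun n => a (n + 2) * r ^ ce μ n) ∧
        (Summable fun n => TT μ k ϑ a n * r ^ ce μ n) ∧
        (Summable fun n => TT μ m lam a n * r ^ ce μ n) := by
      intro r h0 h1
      have hz : (norm : ℂ → ℝ) (r : ℂ) < 1 := by rwa [Complex.norm_real, Real.norm_eq_abs, _root_.abs_of_nonneg h0]
      have habsr : (norm : ℂ → ℝ) (r : ℂ) = r := by rw [Complex.norm_real, Real.norm_eq_abs, _root_.abs_of_nonneg h0]
      obtain ⟨s1, s2, s3⟩ := hsum (r : ℂ) hz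
      refine ⟨s1.congr fun n => ?_, s2.congr fun n => ?_, s3.congr fun n => ?_⟩
      · show (norm : ℂ → ℝ) ((a (n + 2) : ℂ) * (r : ℂ) ^ ((ce μ n : ℝ) : ℂ)) =
          a (n + 2) * r ^ ce μ n
        rw [abs_term, habsr, _root_.abs_of_nonneg (ha (n + 2) (by omega))]
      · show (norm : ℂ → ℝ) ((TT μ k ϑ a n : ℂ) * (r : ℂ) ^ ((ce μ n : ℝ) : ℂ)) =
          TT μ k ϑ a n * r ^ ce μ n
        rw [abs_term, habsr, _root_.abs_of_nonneg (hT0 n)]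
      · show (norm : ℂ → ℝ) ((TT μ m lam a n : ℂ) * (r : ℂ) ^ ((ce μ n : ℝ) : ℂ)) =
          TT μ m lam a n * r ^ ce μ n
        rw [abs_term, habsr, _root_.abs_of_nonneg (hST' n).1]
    have hsumX : ∀ r : ℝ, 0 < r → r < 1 →
        Summable (fun n => (Xi μ A B γ k m ϑ lam (n + 2) * a (n + 2)) * r ^ ce μ n) := by
      intro r h0 h1
      obtain ⟨-, sT, sS⟩ := hrsum r h0.le h1
      apply (((sT.sub sS).mul_left (1 - B)).add (sS.mul_left ((A - B) * (1 - γ)))).congr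
      intro n
      rw [hXiEq' n]
      ring
    have hkey : ∀ r : ℝ, 0 < r → r < 1 →
        (A - B) * (1 - γ) * r ≠
          ∑' n, (Xi μ A B γ k m ϑ lam (n + 2) * a (n + 2)) * r ^ ce μ n := by
      intro r h0 h1 hcontra
      have hz : (norm : ℂ → ℝ) (r : ℂ) < 1 := by
        rw [Complex.norm_real, Real.norm_eq_abs, _root_.abs_of_nonneg h0.le]; exact h1
      have hz0 : (r : ℂ) ≠ 0 := ofReal_ne_zero.2 h0.ne'
      have hsub' := hsub (r : ℂ) hz hz0
      obtain ⟨-, sT, sS⟩ := hrsum r h0.le h1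
      rw [Gneg_real μ k ϑ a h0.le, Gneg_real μ m lam a h0.le, ← ofReal_sub, ← ofReal_mul,
        ← ofReal_mul, ← ofReal_sub, Complex.norm_real, Real.norm_eq_abs, Complex.norm_real,
        Real.norm_eq_abs] at hsub'
      set StT := ∑' n, TT μ k ϑ a n * r ^ ce μ n with hStT
      set StS := ∑' n, TT μ m lam a n * r ^ ce μ n with hStS
      have hXsum_eq : ∑' n, (Xi μ A B γ k m ϑ lam (n + 2) * a (n + 2)) * r ^ ce μ n =
          (1 - B) * (StT - StS) + (A - B) * (1 - γ) * StS := by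
        rw [← tsum_combo sT sS B ((A - B) * (1 - γ))]
        exact tsum_congr fun n => by rw [hXiEq' n]
      rw [hXsum_eq] at hcontra
      have e1 : (r - StT) - (r - StS) = -(StT - StS) := by ring
      have e2 : (A - B) * (1 - γ) * (r - StS) - B * (-(StT - StS)) =
          StT - StS := by linear_combination hcontra
      rw [e1, e2, abs_neg] at hsub'
      exact lt_irrefl _ hsub'
    refine ⟨fun r h0 h1 => (hrsum r h0 h1).1, ?_, ?_⟩
    · exact (forward_core μ ((A - B) * (1 - γ)) _ hμ hP hXi0' hsumX hkey).1
    · exact (forward_core μ ((A - B) * (1 - γ)) _ hμ hP hXi0' hsumX hkey).2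
  · -- backward direction
    rintro ⟨hSa, hSXi, hXile⟩
    have hTsum : Summable (TT μ k ϑ a) := by
      have h1 : Summable (fun n => (A - B) * (1 - γ) * TT μ k ϑ a n) :=
        hSXi.of_nonneg_of_le (fun n => mul_nonneg hP.le (hT0 n)) hXige
      apply (h1.mul_left ((A - B) * (1 - γ))⁻¹).congr
      intro n
      exact inv_mul_cancel_left₀ hP.ne' _
    constructor
    · -- summability part of memE
      intro z hz
      have hrc1 : ∀ n, (norm : ℂ → ℝ) z ^ ce μ n ≤ 1 := fun n =>
        Real.rpow_le_one (norm_nonneg z) hz.le (by linarith [(ce2 hμ n).1])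
      have hrc0 : ∀ n, 0 ≤ (norm : ℂ → ℝ) z ^ ce μ n := fun n =>
        Real.rpow_nonneg (norm_nonneg z) _
      refine ⟨?_, ?_, ?_⟩
      · apply (hSa ((norm : ℂ → ℝ) z) (norm_nonneg z) hz).congr
        intro n
        show a (n + 2) * (norm : ℂ → ℝ) z ^ ce μ n =
          (norm : ℂ → ℝ) ((a (n + 2) : ℂ) * z ^ ((ce μ n : ℝ) : ℂ))
        rw [abs_term, _root_.abs_of_nonneg (ha (n + 2) (by omega))]
      · apply hTsum.of_nonneg_of_le (fun n => norm_nonneg _)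
        intro n
        show (norm : ℂ → ℝ) ((TT μ k ϑ a n : ℂ) * z ^ ((ce μ n : ℝ) : ℂ)) ≤ TT μ k ϑ a n
        rw [abs_term, _root_.abs_of_nonneg (hT0 n)]
        exact mul_le_of_le_one_right (hT0 n) (hrc1 n)
      · apply hTsum.of_nonneg_of_le (fun n => norm_nonneg _)
        intro n
        show (norm : ℂ → ℝ) ((TT μ m lam a n : ℂ) * z ^ ((ce μ n : ℝ) : ℂ)) ≤ TT μ k ϑ a n
        rw [abs_term, _root_.abs_of_nonneg (hST' n).1]
        calc TT μ m lam a n * (norm : ℂ → ℝ) z ^ ce μ n ≤ TT μ m lam a n :=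
              mul_le_of_le_one_right (hST' n).1 (hrc1 n)
          _ ≤ TT μ k ϑ a n := (hST' n).2
    · -- subordination part of memE
      intro z hz hz0
      exact backward_core μ B ((A - B) * (1 - γ)) k m ϑ lam a
        (fun n => Xi μ A B γ k m ϑ lam (n + 2) * a (n + 2)) hμ hP hB0 hST' hXiEq' hXi0'
        hSXi hXile hTsum (fun n => (ce2 hμ n).2) z hz hz0
end

section
/- Assume Σ_{n=2}^∞ Ξ(n)·aₙ ≤ (A−B)(1−γ), that Ξ(2) > 0, and that Ξ(n) ≥ Ξ(2) for all n ≥ 2. Set K = (A−B)(1−γ)/Ξ(2). Then for every z ∈ 𝕌, |z| − K·|z|^{2μ} ≤ |F_μ(z)| ≤ |z| + K·|z|^{2μ}. -/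
open Complex

/-- Termwise derivative series `F_μ′(z) = 1 − Σ_{n≥2} μn·aₙ z^{μn−1}`. -/
noncomputable def Fder (μ : ℝ) (a : ℕ → ℝ) (z : ℂ) : ℂ :=
  1 - ∑' n : ℕ, ((μ * (n + 2 : ℕ) * a (n + 2) : ℝ) : ℂ) *
    z ^ ((μ * (n + 2 : ℕ) - 1 : ℝ) : ℂ)

/-- distortion theorem, Theorem 2.3 of the paper: if
`Σ_{n≥2} Ξ(n)aₙ ≤ (A−B)(1−γ)`, `Ξ(2) > 0` and `Ξ(n) ≥ Ξ(2)` for all `n ≥ 2`, then with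
`K = (A−B)(1−γ)/Ξ(2)` we have `|z| − K|z|^{2μ} ≤ |F_μ(z)| ≤ |z| + K|z|^{2μ}` on 𝕌. -/
theorem stmt4 (μ A B γ : ℝ) (k m : ℕ) (a ϑ lam : ℕ → ℝ)
    (hμ : 1 ≤ μ) (hkm : m ≤ k)
    (hB : -1 ≤ B) (hBA : B < A) (hA : A ≤ 1) (hB0 : B < 0)
    (hγ0 : 0 ≤ γ) (hγ1 : γ < 1)
    (ha : ∀ n, 2 ≤ n → 0 ≤ a n)
    (hlam : ∀ n, 2 ≤ n → 0 ≤ lam n) (hϑ : ∀ n, 2 ≤ n → lam n ≤ ϑ n)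
    (hsum : Summable fun n : ℕ => Xi μ A B γ k m ϑ lam (n + 2) * a (n + 2))
    (hle : (∑' n : ℕ, Xi μ A B γ k m ϑ lam (n + 2) * a (n + 2)) ≤ (A - B) * (1 - γ))
    (hXi2 : 0 < Xi μ A B γ k m ϑ lam 2)
    (hmono : ∀ n, 2 ≤ n → Xi μ A B γ k m ϑ lam 2 ≤ Xi μ A B γ k m ϑ lam n) :
    ∀ z : ℂ, ‖z‖ < 1 →
      ‖z‖ - (A - B) * (1 - γ) / Xi μ A B γ k m ϑ lam 2 *
          ‖z‖ ^ (2 * μ) ≤ ‖Fneg μ a z‖ ∧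
      ‖Fneg μ a z‖ ≤ ‖z‖ +
        (A - B) * (1 - γ) / Xi μ A B γ k m ϑ lam 2 * ‖z‖ ^ (2 * μ) := by
  intro z hz
  set r := ‖z‖ with hr
  have hX2 : (0:ℝ) < Xi μ A B γ k m ϑ lam 2 := hXi2
  set X2 := Xi μ A B γ k m ϑ lam 2 with hX2def
  set K := (A - B) * (1 - γ) / X2 with hK
  have hr0 : 0 ≤ r := norm_nonneg z
  have hnorm : ∀ n : ℕ, ‖(a (n + 2) : ℂ) * z ^ ((μ * (n + 2 : ℕ) : ℝ) : ℂ)‖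
      = a (n + 2) * r ^ (μ * ((n + 2 : ℕ) : ℝ)) := by
    intro n
    rw [norm_mul, Complex.norm_cpow_real, Complex.norm_real,
      Real.norm_of_nonneg (ha _ (by omega))]
  have hpow : ∀ n : ℕ, r ^ (μ * ((n + 2 : ℕ) : ℝ)) ≤ r ^ (2 * μ) := by
    intro n
    have hcast : (2:ℝ) ≤ ((n + 2 : ℕ) : ℝ) := by
      push_cast; linarith [Nat.cast_nonneg (α := ℝ) n]
    rcases eq_or_lt_of_le hr0 with h0 | h0
    · rw [← h0, Real.zero_rpow (by nlinarith), Real.zero_rpow (by nlinarith)]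
    · exact Real.rpow_le_rpow_of_exponent_ge h0 (le_of_lt hz) (by nlinarith)
  have haX : ∀ n : ℕ, a (n + 2) ≤ Xi μ A B γ k m ϑ lam (n + 2) * a (n + 2) / X2 := by
    intro n
    rw [le_div_iff₀ hX2]
    have h1 := hmono (n + 2) (by omega)
    have h2 := ha (n + 2) (by omega)
    nlinarith
  have hsa : Summable (fun n : ℕ => a (n + 2)) :=
    Summable.of_nonneg_of_le (fun n => ha _ (by omega)) haX (hsum.div_const X2)
  have hSK : (∑' n : ℕ, a (n + 2)) ≤ K := by
    have h1 : (∑' n : ℕ, a (n + 2)) ≤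
        ∑' n : ℕ, Xi μ A B γ k m ϑ lam (n + 2) * a (n + 2) / X2 :=
      Summable.tsum_le_tsum haX hsa (hsum.div_const X2)
    have h2 : (∑' n : ℕ, Xi μ A B γ k m ϑ lam (n + 2) * a (n + 2) / X2)
        = (∑' n : ℕ, Xi μ A B γ k m ϑ lam (n + 2) * a (n + 2)) / X2 :=
      tsum_div_const
    rw [h2] at h1
    refine h1.trans ?_
    rw [hK]
    gcongr
  have hsum2 : Summable (fun n : ℕ => a (n + 2) * r ^ (2 * μ)) := hsa.mul_right _
  have hsumN : Summable (fun n : ℕ =>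
      ‖(a (n + 2) : ℂ) * z ^ ((μ * (n + 2 : ℕ) : ℝ) : ℂ)‖) := by
    refine Summable.of_nonneg_of_le (fun n => norm_nonneg _) ?_ hsum2
    intro n
    rw [hnorm]
    exact mul_le_mul_of_nonneg_left (hpow n) (ha _ (by omega))
  have hT : ‖∑' n : ℕ, (a (n + 2) : ℂ) * z ^ ((μ * (n + 2 : ℕ) : ℝ) : ℂ)‖
      ≤ K * r ^ (2 * μ) := by
    calc ‖∑' n : ℕ, (a (n + 2) : ℂ) * z ^ ((μ * (n + 2 : ℕ) : ℝ) : ℂ)‖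
        ≤ ∑' n : ℕ, ‖(a (n + 2) : ℂ) * z ^ ((μ * (n + 2 : ℕ) : ℝ) : ℂ)‖ :=
          norm_tsum_le_tsum_norm hsumN
      _ ≤ ∑' n : ℕ, a (n + 2) * r ^ (2 * μ) := by
          refine Summable.tsum_le_tsum ?_ hsumN hsum2
          intro n
          rw [hnorm]
          exact mul_le_mul_of_nonneg_left (hpow n) (ha _ (by omega))
      _ = (∑' n : ℕ, a (n + 2)) * r ^ (2 * μ) := tsum_mul_right
      _ ≤ K * r ^ (2 * μ) := by
          have : (0:ℝ) ≤ r ^ (2 * μ) := Real.rpow_nonneg hr0 _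
          exact mul_le_mul_of_nonneg_right hSK this
  have hFeq : Fneg μ a z = z - ∑' n : ℕ, (a (n + 2) : ℂ) *
      z ^ ((μ * (n + 2 : ℕ) : ℝ) : ℂ) := rfl
  constructor
  · have := norm_sub_norm_le z (∑' n : ℕ, (a (n + 2) : ℂ) * z ^ ((μ * (n + 2 : ℕ) : ℝ) : ℂ))
    rw [hFeq]
    linarith
  · have := norm_sub_le z (∑' n : ℕ, (a (n + 2) : ℂ) * z ^ ((μ * (n + 2 : ℕ) : ℝ) : ℂ))
    rw [hFeq]
    linarith
end

section
/- Assume Σ_{n=2}^∞ Ξ(n)·aₙ ≤ (A−B)(1−γ), and let r₁ = inf_{n≥2} [ (Ξ(n)/((A−B)(1−γ))) · (1−ψ)/(μn−ψ) ]^{1/(μn−1)}. Then F_μ is starlike of order ψ in |z| < r₁: for every z ∈ 𝕌* with 0 < |z| < r₁ one has F_μ(z) ≠ 0 and Re( z·F_μ′(z) / F_μ(z) ) > ψ. -/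
open Complex

set_option maxHeartbeats 1000000 in
/-- radius of starlikeness: if `Σ_{n≥2} Ξ(n)aₙ ≤ (A−B)(1−γ)` then, with
`r₁ = inf_{n≥2} [(Ξ(n)/((A−B)(1−γ)))·(1−ψ)/(μn−ψ)]^{1/(μn−1)}`, the function `F_μ` is
starlike of order `ψ` for `0 < |z| < r₁` in the slit unit disk:
`F_μ(z) ≠ 0` and `Re(z F_μ′(z)/F_μ(z)) > ψ`. -/
theorem stmt6 (μ A B γ ψ : ℝ) (k m : ℕ) (a ϑ lam : ℕ → ℝ)
    (hμ : 1 ≤ μ) (hkm : m ≤ k)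
    (hB : -1 ≤ B) (hBA : B < A) (hA : A ≤ 1) (hB0 : B < 0)
    (hγ0 : 0 ≤ γ) (hγ1 : γ < 1) (hψ0 : 0 ≤ ψ) (hψ1 : ψ < 1)
    (ha : ∀ n, 2 ≤ n → 0 ≤ a n)
    (hlam : ∀ n, 2 ≤ n → 0 ≤ lam n) (hϑ : ∀ n, 2 ≤ n → lam n ≤ ϑ n)
    (hsum : Summable fun n : ℕ => Xi μ A B γ k m ϑ lam (n + 2) * a (n + 2))
    (hle : (∑' n : ℕ, Xi μ A B γ k m ϑ lam (n + 2) * a (n + 2)) ≤ (A - B) * (1 - γ)) :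
    ∀ z : ℂ, ‖z‖ < 1 → (¬ ∃ x : ℝ, x ≤ 0 ∧ (x : ℂ) = z) →
      0 < ‖z‖ →
      ‖z‖ <
        (⨅ n : ℕ, (Xi μ A B γ k m ϑ lam (n + 2) / ((A - B) * (1 - γ)) *
            ((1 - ψ) / (μ * (n + 2 : ℕ) - ψ))) ^ ((1 : ℝ) / (μ * (n + 2 : ℕ) - 1))) →
      Fneg μ a z ≠ 0 ∧ ψ < (z * Fder μ a z / Fneg μ a z).re := by
  intro z hz1 _hslit hz0 hzr
  set r := ‖z‖ with hrdef
  have hr0 : 0 < r := hz0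
  have hzne : z ≠ 0 := by
    intro h; rw [hrdef, h] at hz0; simp at hz0
  have hC : 0 < (A - B) * (1 - γ) := mul_pos (sub_pos.2 hBA) (sub_pos.2 hγ1)
  have hψ1' : 0 < 1 - ψ := sub_pos.2 hψ1
  -- N n := μ * (n+2) ≥ 2
  have hN2 : ∀ n : ℕ, (2 : ℝ) ≤ μ * ((n : ℝ) + 2) := by
    intro n
    have h2 : (2 : ℝ) ≤ (n : ℝ) + 2 := by
      have : (0:ℝ) ≤ (n:ℝ) := n.cast_nonneg
      linarith
    nlinarith
  have ha' : ∀ n : ℕ, 0 ≤ a (n + 2) := fun n => ha (n + 2) (by omega)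
  have hXi0 : ∀ n : ℕ, 0 ≤ Xi μ A B γ k m ϑ lam (n + 2) := by
    intro n
    have hbase : (1 : ℝ) ≤ μ * ((n + 2 : ℕ) : ℝ) := by
      have := hN2 n; push_cast; push_cast at this; linarith
    have hlam0 : 0 ≤ lam (n + 2) := hlam _ (by omega)
    have hϑl : lam (n + 2) ≤ ϑ (n + 2) := hϑ _ (by omega)
    have hpow : (μ * ((n + 2 : ℕ) : ℝ)) ^ m ≤ (μ * ((n + 2 : ℕ) : ℝ)) ^ k :=
      pow_le_pow_right₀ hbase hkm
    have hpm : (0 : ℝ) ≤ (μ * ((n + 2 : ℕ) : ℝ)) ^ m := by positivity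
    have h1 : (μ * ((n + 2 : ℕ) : ℝ)) ^ m * lam (n + 2) ≤
        (μ * ((n + 2 : ℕ) : ℝ)) ^ k * ϑ (n + 2) := by
      calc (μ * ((n + 2 : ℕ) : ℝ)) ^ m * lam (n + 2)
          ≤ (μ * ((n + 2 : ℕ) : ℝ)) ^ k * lam (n + 2) :=
            mul_le_mul_of_nonneg_right hpow hlam0
        _ ≤ (μ * ((n + 2 : ℕ) : ℝ)) ^ k * ϑ (n + 2) := by
            apply mul_le_mul_of_nonneg_left hϑl; positivity
    unfold Xi
    have h2 : (0:ℝ) ≤ (1 - B) := by linarith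
    nlinarith [mul_nonneg hpm hlam0]
  -- the comparison series g
  set g : ℕ → ℝ :=
    fun n => Xi μ A B γ k m ϑ lam (n + 2) * a (n + 2) / ((A - B) * (1 - γ)) with hgdef
  have hg0 : ∀ n, 0 ≤ g n := fun n => div_nonneg (mul_nonneg (hXi0 n) (ha' n)) hC.le
  have hgsum : Summable g := hsum.div_const _
  have hgle : ∑' n, g n ≤ 1 := by
    rw [hgdef, tsum_div_const]
    exact (div_le_one hC).2 hle
  -- per-n inequality from the infimum hypothesis
  have hNψ : ∀ n : ℕ, (0 : ℝ) < μ * ((n : ℝ) + 2) - ψ := fun n => by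
    have := hN2 n; linarith
  have hcn0 : ∀ n : ℕ, 0 ≤ Xi μ A B γ k m ϑ lam (n + 2) / ((A - B) * (1 - γ)) *
      ((1 - ψ) / (μ * ((n + 2 : ℕ) : ℝ) - ψ)) := by
    intro n
    apply mul_nonneg (div_nonneg (hXi0 n) hC.le)
    apply div_nonneg hψ1'.le
    have := hNψ n; push_cast; linarith
  have hbdd : BddBelow (Set.range fun n : ℕ =>
      (Xi μ A B γ k m ϑ lam (n + 2) / ((A - B) * (1 - γ)) *
        ((1 - ψ) / (μ * ((n + 2 : ℕ) : ℝ) - ψ))) ^ ((1 : ℝ) / (μ * ((n + 2 : ℕ) : ℝ) - 1))) := by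
    refine ⟨0, ?_⟩
    rintro x ⟨n, rfl⟩
    exact Real.rpow_nonneg (hcn0 n) _
  have hkey : ∀ n : ℕ, r ^ (μ * ((n + 2 : ℕ) : ℝ) - 1) <
      Xi μ A B γ k m ϑ lam (n + 2) / ((A - B) * (1 - γ)) *
        ((1 - ψ) / (μ * ((n + 2 : ℕ) : ℝ) - ψ)) := by
    intro n
    have hrn : r < (Xi μ A B γ k m ϑ lam (n + 2) / ((A - B) * (1 - γ)) *
        ((1 - ψ) / (μ * ((n + 2 : ℕ) : ℝ) - ψ))) ^ ((1 : ℝ) / (μ * ((n + 2 : ℕ) : ℝ) - 1)) :=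
      hzr.trans_le (ciInf_le hbdd n)
    have he : (0 : ℝ) < μ * ((n + 2 : ℕ) : ℝ) - 1 := by
      have := hN2 n; push_cast; linarith
    have := Real.rpow_lt_rpow hr0.le hrn he
    rwa [← Real.rpow_mul (hcn0 n), one_div_mul_cancel he.ne', Real.rpow_one] at this
  -- the series h
  set h : ℕ → ℝ := fun n => (μ * ((n + 2 : ℕ) : ℝ) - ψ) / (1 - ψ) *
    (a (n + 2) * r ^ (μ * ((n + 2 : ℕ) : ℝ) - 1)) with hhdef
  have hrp0 : ∀ n : ℕ, (0:ℝ) ≤ r ^ (μ * ((n + 2 : ℕ) : ℝ) - 1) :=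
    fun n => Real.rpow_nonneg hr0.le _
  have hq1 : ∀ n : ℕ, (1 : ℝ) ≤ (μ * ((n + 2 : ℕ) : ℝ) - ψ) / (1 - ψ) := by
    intro n
    rw [le_div_iff₀ hψ1']
    have := hN2 n; push_cast; linarith
  have hh0 : ∀ n, 0 ≤ h n := by
    intro n
    exact mul_nonneg (le_trans zero_le_one (hq1 n)) (mul_nonneg (ha' n) (hrp0 n))
  have hhg : ∀ n, h n ≤ g n := by
    intro n
    have h1 := hkey n
    have hcoef : 0 ≤ a (n + 2) * ((μ * ((n + 2 : ℕ) : ℝ) - ψ) / (1 - ψ)) := by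
      apply mul_nonneg (ha' n); linarith [hq1 n]
    have h2 := mul_le_mul_of_nonneg_left h1.le hcoef
    have hNψ' : (0:ℝ) < μ * ((n + 2 : ℕ) : ℝ) - ψ := by
      have := hN2 n; push_cast; linarith
    calc h n = a (n + 2) * ((μ * ((n + 2 : ℕ) : ℝ) - ψ) / (1 - ψ)) *
          r ^ (μ * ((n + 2 : ℕ) : ℝ) - 1) := by rw [hhdef]; ring
      _ ≤ a (n + 2) * ((μ * ((n + 2 : ℕ) : ℝ) - ψ) / (1 - ψ)) *
          (Xi μ A B γ k m ϑ lam (n + 2) / ((A - B) * (1 - γ)) *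
            ((1 - ψ) / (μ * ((n + 2 : ℕ) : ℝ) - ψ))) := h2
      _ = Xi μ A B γ k m ϑ lam (n + 2) / ((A - B) * (1 - γ)) * a (n + 2) *
          ((μ * ((n + 2 : ℕ) : ℝ) - ψ) / (1 - ψ) * ((1 - ψ) / (μ * ((n + 2 : ℕ) : ℝ) - ψ))) := by
          ring
      _ = g n := by
          rw [div_mul_div_comm, mul_comm (μ * ((n + 2 : ℕ) : ℝ) - ψ) (1 - ψ),
            div_self (mul_ne_zero hψ1'.ne' hNψ'.ne'), mul_one, hgdef]
          ring
  have hhg' : ∀ n, 0 < a (n + 2) → h n < g n := by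
    intro n hapos
    have h1 := hkey n
    have hcoef : 0 < a (n + 2) * ((μ * ((n + 2 : ℕ) : ℝ) - ψ) / (1 - ψ)) := by
      apply mul_pos hapos
      linarith [hq1 n]
    have h2 := mul_lt_mul_of_pos_left h1 hcoef
    have hNψ' : (0:ℝ) < μ * ((n + 2 : ℕ) : ℝ) - ψ := by
      have := hN2 n; push_cast; linarith
    calc h n = a (n + 2) * ((μ * ((n + 2 : ℕ) : ℝ) - ψ) / (1 - ψ)) *
          r ^ (μ * ((n + 2 : ℕ) : ℝ) - 1) := by rw [hhdef]; ring
      _ < a (n + 2) * ((μ * ((n + 2 : ℕ) : ℝ) - ψ) / (1 - ψ)) *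
          (Xi μ A B γ k m ϑ lam (n + 2) / ((A - B) * (1 - γ)) *
            ((1 - ψ) / (μ * ((n + 2 : ℕ) : ℝ) - ψ))) := h2
      _ = Xi μ A B γ k m ϑ lam (n + 2) / ((A - B) * (1 - γ)) * a (n + 2) *
          ((μ * ((n + 2 : ℕ) : ℝ) - ψ) / (1 - ψ) * ((1 - ψ) / (μ * ((n + 2 : ℕ) : ℝ) - ψ))) := by
          ring
      _ = g n := by
          rw [div_mul_div_comm, mul_comm (μ * ((n + 2 : ℕ) : ℝ) - ψ) (1 - ψ),
            div_self (mul_ne_zero hψ1'.ne' hNψ'.ne'), mul_one, hgdef]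
          ring
  have hhsum : Summable h := Summable.of_nonneg_of_le hh0 hhg hgsum
  -- Σ h < 1
  have hhlt1 : ∑' n, h n < 1 := by
    by_cases hall : ∀ n : ℕ, a (n + 2) = 0
    · have : ∀ n, h n = 0 := by intro n; rw [hhdef]; simp [hall n]
      rw [tsum_congr this, tsum_zero]; norm_num
    · push_neg at hall
      obtain ⟨n0, hn0⟩ := hall
      have hn0' : 0 < a (n0 + 2) := lt_of_le_of_ne (ha' n0) (Ne.symm hn0)
      exact lt_of_lt_of_le (Summable.tsum_lt_tsum_of_nonneg hh0 hhg (hhg' n0 hn0') hgsum) hgle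
  -- auxiliary summabilities
  have hpsum : Summable fun n : ℕ => a (n + 2) * r ^ (μ * ((n + 2 : ℕ) : ℝ) - 1) := by
    apply Summable.of_nonneg_of_le (fun n => mul_nonneg (ha' n) (hrp0 n)) _ hhsum
    intro n
    calc a (n + 2) * r ^ (μ * ((n + 2 : ℕ) : ℝ) - 1)
        = 1 * (a (n + 2) * r ^ (μ * ((n + 2 : ℕ) : ℝ) - 1)) := by ring
      _ ≤ h n := by
          rw [hhdef]
          exact mul_le_mul_of_nonneg_right (hq1 n) (mul_nonneg (ha' n) (hrp0 n))
  -- r ^ N = r ^ (N-1) * r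
  have hrsplit : ∀ n : ℕ, r ^ (μ * ((n + 2 : ℕ) : ℝ)) =
      r ^ (μ * ((n + 2 : ℕ) : ℝ) - 1) * r := by
    intro n
    have := Real.rpow_add hr0 (μ * ((n + 2 : ℕ) : ℝ) - 1) 1
    rw [Real.rpow_one] at this
    rw [← this]
    congr 1
    ring
  -- bounds on the coefficient (N-1) and N relative to (N-ψ)/(1-ψ)
  have hqN : ∀ n : ℕ, μ * ((n + 2 : ℕ) : ℝ) ≤ (μ * ((n + 2 : ℕ) : ℝ) - ψ) / (1 - ψ) := by
    intro n
    rw [le_div_iff₀ hψ1']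
    have := hN2 n; push_cast; nlinarith
  have hqN1 : ∀ n : ℕ, μ * ((n + 2 : ℕ) : ℝ) - 1 ≤ (μ * ((n + 2 : ℕ) : ℝ) - ψ) / (1 - ψ) := by
    intro n
    rw [le_div_iff₀ hψ1']
    have := hN2 n; push_cast; nlinarith
  -- complex summabilities
  have hnormS : ∀ n : ℕ, ‖(a (n + 2) : ℂ) * z ^ ((μ * ((n + 2 : ℕ) : ℝ) : ℝ) : ℂ)‖
      = a (n + 2) * r ^ (μ * ((n + 2 : ℕ) : ℝ)) := by
    intro n
    rw [norm_mul, Complex.norm_real, Real.norm_eq_abs,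
      Complex.norm_cpow_real, _root_.abs_of_nonneg (ha' n)]
  have hnormT : ∀ n : ℕ, ‖((μ * ((n + 2 : ℕ) : ℝ) * a (n + 2) : ℝ) : ℂ) *
      z ^ ((μ * ((n + 2 : ℕ) : ℝ) - 1 : ℝ) : ℂ)‖
      = μ * ((n + 2 : ℕ) : ℝ) * a (n + 2) * r ^ (μ * ((n + 2 : ℕ) : ℝ) - 1) := by
    intro n
    rw [norm_mul, Complex.norm_real, Real.norm_eq_abs,
      Complex.norm_cpow_real]
    congr 1
    rw [_root_.abs_of_nonneg]
    apply mul_nonneg _ (ha' n)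
    have := hN2 n; push_cast; linarith
  have hsumSc : Summable fun n : ℕ =>
      (a (n + 2) : ℂ) * z ^ ((μ * ((n + 2 : ℕ) : ℝ) : ℝ) : ℂ) := by
    apply Summable.of_norm
    apply Summable.of_nonneg_of_le (fun n => norm_nonneg _) _ (hpsum.mul_right r)
    intro n
    rw [hnormS n, hrsplit n, ← mul_assoc]
  have hTbound : ∀ n : ℕ, μ * ((n + 2 : ℕ) : ℝ) * a (n + 2) *
      r ^ (μ * ((n + 2 : ℕ) : ℝ) - 1) ≤ h n := by
    intro n
    simp only [hhdef]
    rw [← mul_assoc]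
    exact mul_le_mul_of_nonneg_right
      (mul_le_mul_of_nonneg_right (hqN n) (ha' n)) (hrp0 n)
  have hsumTc : Summable fun n : ℕ =>
      ((μ * ((n + 2 : ℕ) : ℝ) * a (n + 2) : ℝ) : ℂ) *
        z ^ ((μ * ((n + 2 : ℕ) : ℝ) - 1 : ℝ) : ℂ) := by
    apply Summable.of_norm
    apply Summable.of_nonneg_of_le (fun n => norm_nonneg _) _ hhsum
    intro n
    rw [hnormT n]
    exact hTbound n
  have hsumzT : Summable fun n : ℕ =>
      ((μ * ((n + 2 : ℕ) : ℝ) * a (n + 2) : ℝ) : ℂ) *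
        z ^ ((μ * ((n + 2 : ℕ) : ℝ) : ℝ) : ℂ) := by
    apply Summable.of_norm
    apply Summable.of_nonneg_of_le (fun n => norm_nonneg _) _ (hhsum.mul_right r)
    intro n
    rw [norm_mul, Complex.norm_real, Real.norm_eq_abs,
      Complex.norm_cpow_real, hrsplit n, ← mul_assoc]
    apply mul_le_mul_of_nonneg_right _ hr0.le
    rw [_root_.abs_of_nonneg]
    · exact hTbound n
    · apply mul_nonneg _ (ha' n)
      have := hN2 n; push_cast; linarith
  -- the cpow splitting
  have hzz : ∀ n : ℕ, z ^ ((μ * ((n + 2 : ℕ) : ℝ) : ℝ) : ℂ)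
      = z ^ ((μ * ((n + 2 : ℕ) : ℝ) - 1 : ℝ) : ℂ) * z := by
    intro n
    have hcast : ((μ * ((n + 2 : ℕ) : ℝ) : ℝ) : ℂ)
        = ((μ * ((n + 2 : ℕ) : ℝ) - 1 : ℝ) : ℂ) + 1 := by push_cast; ring
    rw [hcast, Complex.cpow_add _ _ hzne, Complex.cpow_one]
  -- names for the tsums
  set Sc : ℂ := ∑' n : ℕ, (a (n + 2) : ℂ) * z ^ ((μ * (n + 2 : ℕ) : ℝ) : ℂ) with hScdef
  set Tc : ℂ := ∑' n : ℕ, ((μ * (n + 2 : ℕ) * a (n + 2) : ℝ) : ℂ) *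
    z ^ ((μ * (n + 2 : ℕ) - 1 : ℝ) : ℂ) with hTcdef
  have hzT : z * Tc = ∑' n : ℕ, ((μ * ((n + 2 : ℕ) : ℝ) * a (n + 2) : ℝ) : ℂ) *
      z ^ ((μ * ((n + 2 : ℕ) : ℝ) : ℝ) : ℂ) := by
    rw [hTcdef, ← tsum_mul_left]
    apply tsum_congr
    intro n
    rw [hzz n]
    ring
  have hnum : z * Fder μ a z - Fneg μ a z = Sc - z * Tc := by
    rw [Fder, Fneg, ← hScdef, ← hTcdef]
    ring
  -- real sums
  set S0 : ℝ := ∑' n : ℕ, a (n + 2) * r ^ (μ * ((n + 2 : ℕ) : ℝ)) with hS0def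
  set U : ℝ := ∑' n : ℕ, (μ * ((n + 2 : ℕ) : ℝ) - 1) * a (n + 2) *
    r ^ (μ * ((n + 2 : ℕ) : ℝ)) with hUdef
  have hS0sum : Summable fun n : ℕ => a (n + 2) * r ^ (μ * ((n + 2 : ℕ) : ℝ)) := by
    apply Summable.of_nonneg_of_le
      (fun n => mul_nonneg (ha' n) (Real.rpow_nonneg hr0.le _))
      _ (hpsum.mul_right r)
    intro n
    rw [hrsplit n, ← mul_assoc]
  have hUterm_le : ∀ n : ℕ, (μ * ((n + 2 : ℕ) : ℝ) - 1) * a (n + 2) *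
      r ^ (μ * ((n + 2 : ℕ) : ℝ)) ≤ h n * r := by
    intro n
    rw [hrsplit n, ← mul_assoc]
    simp only [hhdef]
    apply mul_le_mul_of_nonneg_right _ hr0.le
    rw [← mul_assoc]
    exact mul_le_mul_of_nonneg_right
      (mul_le_mul_of_nonneg_right (hqN1 n) (ha' n)) (hrp0 n)
  have hUterm0 : ∀ n : ℕ, 0 ≤ (μ * ((n + 2 : ℕ) : ℝ) - 1) * a (n + 2) *
      r ^ (μ * ((n + 2 : ℕ) : ℝ)) := by
    intro n
    apply mul_nonneg (mul_nonneg _ (ha' n)) (Real.rpow_nonneg hr0.le _)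
    have := hN2 n; push_cast; linarith
  have hUsum : Summable fun n : ℕ => (μ * ((n + 2 : ℕ) : ℝ) - 1) * a (n + 2) *
      r ^ (μ * ((n + 2 : ℕ) : ℝ)) :=
    Summable.of_nonneg_of_le hUterm0 hUterm_le (hhsum.mul_right r)
  -- the main real inequality: U + (1-ψ) S0 < (1-ψ) r
  have hmain : U + (1 - ψ) * S0 < (1 - ψ) * r := by
    have hsum2 : Summable fun n : ℕ => (1 - ψ) * (a (n + 2) * r ^ (μ * ((n + 2 : ℕ) : ℝ))) :=
      hS0sum.mul_left _
    have heq : U + (1 - ψ) * S0 = ∑' n : ℕ, (1 - ψ) * r * h n := by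
      rw [hUdef, hS0def, ← tsum_mul_left, ← Summable.tsum_add hUsum hsum2]
      apply tsum_congr
      intro n
      rw [hhdef, hrsplit n]
      field_simp
      ring
    rw [heq, tsum_mul_left]
    calc (1 - ψ) * r * ∑' n, h n < (1 - ψ) * r * 1 := by
          apply mul_lt_mul_of_pos_left hhlt1 (by positivity)
      _ = (1 - ψ) * r := by ring
  have hU0 : 0 ≤ U := tsum_nonneg hUterm0
  have hS0r : S0 < r := by nlinarith
  -- lower bound on |F|
  have hScle : ‖Sc‖ ≤ S0 := by
    rw [hScdef, hS0def]
    calc ‖∑' n : ℕ, (a (n + 2) : ℂ) * z ^ ((μ * (n + 2 : ℕ) : ℝ) : ℂ)‖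
        ≤ ∑' n : ℕ, ‖(a (n + 2) : ℂ) * z ^ ((μ * (n + 2 : ℕ) : ℝ) : ℂ)‖ :=
          norm_tsum_le_tsum_norm (by
            apply Summable.congr hS0sum
            intro n
            exact (hnormS n).symm)
      _ = ∑' n : ℕ, a (n + 2) * r ^ (μ * ((n + 2 : ℕ) : ℝ)) := tsum_congr hnormS
  have hFlow : r - S0 ≤ ‖Fneg μ a z‖ := by
    have : Fneg μ a z = z - Sc := by rw [Fneg, ← hScdef]
    rw [this]
    have hScle' : ‖Sc‖ ≤ S0 := by
      exact hScle
    calc r - S0 ≤ ‖z‖ - ‖Sc‖ := by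
          rw [← hrdef]
          linarith [hScle']
      _ ≤ ‖z - Sc‖ := norm_sub_norm_le _ _
  have hFpos : 0 < ‖Fneg μ a z‖ := lt_of_lt_of_le (by linarith) hFlow
  have hFne : Fneg μ a z ≠ 0 := by
    intro hF; rw [hF] at hFpos; simp at hFpos
  refine ⟨hFne, ?_⟩
  -- bound on the numerator
  have hdiff : Sc - z * Tc = ∑' n : ℕ, ((a (n + 2) : ℂ) *
      z ^ ((μ * ((n + 2 : ℕ) : ℝ) : ℝ) : ℂ) -
      ((μ * ((n + 2 : ℕ) : ℝ) * a (n + 2) : ℝ) : ℂ) *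
        z ^ ((μ * ((n + 2 : ℕ) : ℝ) : ℝ) : ℂ)) := by
    rw [hzT, hScdef, Summable.tsum_sub hsumSc hsumzT]
  have hnormdiff : ∀ n : ℕ, ‖(a (n + 2) : ℂ) *
      z ^ ((μ * ((n + 2 : ℕ) : ℝ) : ℝ) : ℂ) -
      ((μ * ((n + 2 : ℕ) : ℝ) * a (n + 2) : ℝ) : ℂ) *
        z ^ ((μ * ((n + 2 : ℕ) : ℝ) : ℝ) : ℂ)‖
      = (μ * ((n + 2 : ℕ) : ℝ) - 1) * a (n + 2) * r ^ (μ * ((n + 2 : ℕ) : ℝ)) := by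
    intro n
    have : (a (n + 2) : ℂ) * z ^ ((μ * ((n + 2 : ℕ) : ℝ) : ℝ) : ℂ) -
        ((μ * ((n + 2 : ℕ) : ℝ) * a (n + 2) : ℝ) : ℂ) *
          z ^ ((μ * ((n + 2 : ℕ) : ℝ) : ℝ) : ℂ)
        = (((a (n + 2) - μ * ((n + 2 : ℕ) : ℝ) * a (n + 2)) : ℝ) : ℂ) *
          z ^ ((μ * ((n + 2 : ℕ) : ℝ) : ℝ) : ℂ) := by push_cast; ring
    rw [this, norm_mul, Complex.norm_real, Real.norm_eq_abs,
      Complex.norm_cpow_real]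
    congr 1
    rw [_root_.abs_of_nonpos]
    · ring
    · have := hN2 n
      have := ha' n
      push_cast
      nlinarith
  have hnumbound : ‖Sc - z * Tc‖ ≤ U := by
    rw [hdiff, hUdef]
    calc ‖∑' n : ℕ, ((a (n + 2) : ℂ) * z ^ ((μ * ((n + 2 : ℕ) : ℝ) : ℝ) : ℂ) -
        ((μ * ((n + 2 : ℕ) : ℝ) * a (n + 2) : ℝ) : ℂ) *
          z ^ ((μ * ((n + 2 : ℕ) : ℝ) : ℝ) : ℂ))‖
        ≤ ∑' n : ℕ, ‖(a (n + 2) : ℂ) * z ^ ((μ * ((n + 2 : ℕ) : ℝ) : ℝ) : ℂ) -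
          ((μ * ((n + 2 : ℕ) : ℝ) * a (n + 2) : ℝ) : ℂ) *
            z ^ ((μ * ((n + 2 : ℕ) : ℝ) : ℝ) : ℂ)‖ :=
          norm_tsum_le_tsum_norm (by
            apply Summable.congr hUsum
            intro n
            exact (hnormdiff n).symm)
      _ = ∑' n : ℕ, (μ * ((n + 2 : ℕ) : ℝ) - 1) * a (n + 2) *
          r ^ (μ * ((n + 2 : ℕ) : ℝ)) := tsum_congr hnormdiff
  -- conclude
  set w : ℂ := (z * Fder μ a z - Fneg μ a z) / Fneg μ a z with hwdef
  have hwabs : ‖w‖ < 1 - ψ := by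
    rw [hwdef, norm_div]
    rw [div_lt_iff₀ hFpos]
    calc ‖z * Fder μ a z - Fneg μ a z‖ = ‖Sc - z * Tc‖ := by
          rw [hnum]
      _ ≤ U := hnumbound
      _ < (1 - ψ) * (r - S0) := by nlinarith
      _ ≤ (1 - ψ) * ‖Fneg μ a z‖ := by
          apply mul_le_mul_of_nonneg_left hFlow hψ1'.le
  have hfrac : z * Fder μ a z / Fneg μ a z = 1 + w := by
    rw [hwdef]
    field_simp
    ring
  rw [hfrac]
  have hre : -(‖w‖) ≤ w.re := by
    have := Complex.abs_re_le_norm w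
    rw [abs_le] at this
    exact this.1
  have : (1 + w).re = 1 + w.re := by simp
  rw [this]
  linarith
end

section
/- Assume Σ_{n=2}^∞ Ξ(n)·aₙ ≤ (A−B)(1−γ), and let r₂ = inf_{n≥2} [ (Ξ(n)/((A−B)(1−γ))) · (1−ψ)/(μn(μn−ψ)) ]^{1/(μn−1)}. Then F_μ is convex of order ψ in |z| < r₂: for every z ∈ 𝕌* with 0 < |z| < r₂ one has F_μ′(z) ≠ 0 and Re( 1 + z·F_μ″(z) / F_μ′(z) ) > ψ. -/
open Complex

/-- Termwise second derivative series `F_μ″(z) = −Σ_{n≥2} μn(μn−1)·aₙ z^{μn−2}`. -/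
noncomputable def Fder2 (μ : ℝ) (a : ℕ → ℝ) (z : ℂ) : ℂ :=
  - ∑' n : ℕ, ((μ * (n + 2 : ℕ) * (μ * (n + 2 : ℕ) - 1) * a (n + 2) : ℝ) : ℂ) *
    z ^ ((μ * (n + 2 : ℕ) - 2 : ℝ) : ℂ)

/-- radius of convexity: if `Σ_{n≥2} Ξ(n)aₙ ≤ (A−B)(1−γ)` then, with
`r₂ = inf_{n≥2} [(Ξ(n)/((A−B)(1−γ)))·(1−ψ)/(μn(μn−ψ))]^{1/(μn−1)}`, the function `F_μ`
is convex of order `ψ` for `0 < |z| < r₂` in the slit unit disk: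
`F_μ′(z) ≠ 0` and `Re(1 + z F_μ″(z)/F_μ′(z)) > ψ`. -/
theorem stmt7 (μ A B γ ψ : ℝ) (k m : ℕ) (a ϑ lam : ℕ → ℝ)
    (hμ : 1 ≤ μ) (hkm : m ≤ k)
    (hB : -1 ≤ B) (hBA : B < A) (hA : A ≤ 1) (hB0 : B < 0)
    (hγ0 : 0 ≤ γ) (hγ1 : γ < 1) (hψ0 : 0 ≤ ψ) (hψ1 : ψ < 1)
    (ha : ∀ n, 2 ≤ n → 0 ≤ a n)
    (hlam : ∀ n, 2 ≤ n → 0 ≤ lam n) (hϑ : ∀ n, 2 ≤ n → lam n ≤ ϑ n)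
    (hsum : Summable fun n : ℕ => Xi μ A B γ k m ϑ lam (n + 2) * a (n + 2))
    (hle : (∑' n : ℕ, Xi μ A B γ k m ϑ lam (n + 2) * a (n + 2)) ≤ (A - B) * (1 - γ)) :
    ∀ z : ℂ, ‖z‖ < 1 → (¬ ∃ x : ℝ, x ≤ 0 ∧ (x : ℂ) = z) →
      0 < ‖z‖ →
      ‖z‖ <
        (⨅ n : ℕ, (Xi μ A B γ k m ϑ lam (n + 2) / ((A - B) * (1 - γ)) *
            ((1 - ψ) / (μ * (n + 2 : ℕ) * (μ * (n + 2 : ℕ) - ψ)))) ^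
          ((1 : ℝ) / (μ * (n + 2 : ℕ) - 1))) →
      Fder μ a z ≠ 0 ∧ ψ < (1 + z * Fder2 μ a z / Fder μ a z).re := by
  intro z hz1 _hslit hz0 hzr
  have hzne : z ≠ 0 := by
    intro h; rw [h] at hz0; simp at hz0
  set D : ℝ := (A - B) * (1 - γ) with hD
  have hDpos : 0 < D := mul_pos (sub_pos.2 hBA) (sub_pos.2 hγ1)
  set r : ℝ := ‖z‖ with hr
  have hrpos : 0 < r := hz0
  set N : ℕ → ℝ := fun n => μ * ((n + 2 : ℕ) : ℝ) with hN
  have hN2 : ∀ n, (2 : ℝ) ≤ N n := by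
    intro n
    have h1 : (2 : ℝ) ≤ ((n + 2 : ℕ) : ℝ) := by exact_mod_cast Nat.le_add_left 2 n
    have : (1 : ℝ) * 2 ≤ μ * ((n + 2 : ℕ) : ℝ) :=
      mul_le_mul hμ h1 (by norm_num) (by linarith)
    simpa [hN] using this
  set X : ℕ → ℝ := fun n => Xi μ A B γ k m ϑ lam (n + 2) with hX
  set c : ℕ → ℝ := fun n => a (n + 2) with hc
  have hcnn : ∀ n, 0 ≤ c n := fun n => ha (n + 2) (by omega)
  have hXnn : ∀ n, 0 ≤ X n := by
    intro n
    have hb : (1 : ℝ) ≤ N n := by linarith [hN2 n]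
    have hpow : (N n) ^ m ≤ (N n) ^ k := pow_le_pow_right₀ hb hkm
    have hl : 0 ≤ lam (n + 2) := hlam _ (by omega)
    have ht : lam (n + 2) ≤ ϑ (n + 2) := hϑ _ (by omega)
    have hpm : 0 ≤ (N n) ^ m := pow_nonneg (by linarith) m
    have h1 : (N n) ^ m * lam (n + 2) ≤ (N n) ^ k * ϑ (n + 2) := by
      calc (N n) ^ m * lam (n + 2) ≤ (N n) ^ k * lam (n + 2) :=
            mul_le_mul_of_nonneg_right hpow hl
        _ ≤ (N n) ^ k * ϑ (n + 2) :=
            mul_le_mul_of_nonneg_left ht (pow_nonneg (by linarith) k)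
    have hB1 : (0 : ℝ) < 1 - B := by linarith
    show 0 ≤ Xi μ A B γ k m ϑ lam (n + 2)
    unfold Xi
    have hNn : μ * ((n + 2 : ℕ) : ℝ) = N n := rfl
    rw [hNn]
    have : 0 ≤ (1 - B) * ((N n) ^ k * ϑ (n + 2) - (N n) ^ m * lam (n + 2)) :=
      mul_nonneg hB1.le (by linarith)
    have h2 : 0 ≤ D * ((N n) ^ m * lam (n + 2)) := mul_nonneg hDpos.le (mul_nonneg hpm hl)
    rw [← hD]
    linarith
  set f : ℕ → ℝ := fun n =>
    (X n / D * ((1 - ψ) / (N n * (N n - ψ)))) ^ ((1 : ℝ) / (N n - 1)) with hf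
  have hNψ : ∀ n, 0 < N n - ψ := fun n => by linarith [hN2 n]
  have hNpos : ∀ n, 0 < N n := fun n => by linarith [hN2 n]
  have hbase_nn : ∀ n, 0 ≤ X n / D * ((1 - ψ) / (N n * (N n - ψ))) := by
    intro n
    exact mul_nonneg (div_nonneg (hXnn n) hDpos.le)
      (div_nonneg (by linarith) (mul_nonneg (hNpos n).le (hNψ n).le))
  have hfnn : ∀ n, 0 ≤ f n := fun n => Real.rpow_nonneg (hbase_nn n) _
  have hzr' : r < ⨅ n, f n := hzr
  have hbdd : BddBelow (Set.range f) := ⟨0, fun x ⟨n, hn⟩ => hn ▸ hfnn n⟩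
  have hrlt : ∀ n, r < f n := fun n => lt_of_lt_of_le hzr' (ciInf_le hbdd n)
  have hXpos : ∀ n, 0 < X n := by
    intro n
    rcases (hXnn n).lt_or_eq with h | h
    · exact h
    · exfalso
      have hq : (1 : ℝ) / (N n - 1) ≠ 0 := by
        have h2 := hN2 n
        have h3 : (0:ℝ) < N n - 1 := by linarith
        positivity
      have hf0 : f n = 0 := by
        rw [hf]; simp only [← h, zero_div, zero_mul, Real.zero_rpow hq]
      have hlt := hrlt n
      rw [hf0] at hlt
      linarith
  set t : ℕ → ℝ := fun n => r ^ (N n - 1) with ht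
  have htpos : ∀ n, 0 < t n := fun n => Real.rpow_pos_of_pos hrpos _
  have key : ∀ n, N n * (N n - ψ) * t n < X n / D * (1 - ψ) := by
    intro n
    have hq : (0 : ℝ) < N n - 1 := by linarith [hN2 n]
    have hstep := Real.rpow_lt_rpow hrpos.le (hrlt n) hq
    have hbb : (f n) ^ (N n - 1) = X n / D * ((1 - ψ) / (N n * (N n - ψ))) := by
      rw [hf]
      rw [← Real.rpow_mul (hbase_nn n), one_div_mul_cancel hq.ne', Real.rpow_one]
    rw [hbb, mul_div_assoc'] at hstep
    have hP : (0 : ℝ) < N n * (N n - ψ) := mul_pos (hNpos n) (hNψ n)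
    have := (lt_div_iff₀ hP).1 hstep
    calc N n * (N n - ψ) * t n = t n * (N n * (N n - ψ)) := by ring
      _ < X n / D * (1 - ψ) := this
  set g : ℕ → ℝ := fun n => N n * (N n - ψ) * (c n * t n) with hg
  set h : ℕ → ℝ := fun n => X n * c n * ((1 - ψ) / D) with hh
  have hgh : ∀ n, g n ≤ h n := by
    intro n
    have := mul_le_mul_of_nonneg_left (key n).le (hcnn n)
    calc g n = c n * (N n * (N n - ψ) * t n) := by rw [hg]; ring
      _ ≤ c n * (X n / D * (1 - ψ)) := this
      _ = h n := by rw [hh]; ring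
  have hgh_strict : ∀ n, 0 < c n → g n < h n := by
    intro n hcn
    have := mul_lt_mul_of_pos_left (key n) hcn
    calc g n = c n * (N n * (N n - ψ) * t n) := by rw [hg]; ring
      _ < c n * (X n / D * (1 - ψ)) := this
      _ = h n := by rw [hh]; ring
  have hgnn : ∀ n, 0 ≤ g n := fun n =>
    mul_nonneg (mul_nonneg (hNpos n).le (hNψ n).le) (mul_nonneg (hcnn n) (htpos n).le)
  have hhsum : Summable h := hsum.mul_right _
  have hhle : (∑' n, h n) ≤ 1 - ψ := by
    have h1 : (∑' n, h n) = (∑' n, X n * c n) * ((1 - ψ) / D) := tsum_mul_right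
    have h2 : (∑' n, X n * c n) ≤ D := hle
    have h3 : (0 : ℝ) ≤ (1 - ψ) / D := div_nonneg (by linarith) hDpos.le
    have h4 : D * ((1 - ψ) / D) = 1 - ψ := by field_simp
    calc (∑' n, h n) = (∑' n, X n * c n) * ((1 - ψ) / D) := h1
      _ ≤ D * ((1 - ψ) / D) := mul_le_mul_of_nonneg_right h2 h3
      _ = 1 - ψ := h4
  have hgsum : Summable g := Summable.of_nonneg_of_le hgnn hgh hhsum
  have hS2lt : (∑' n, g n) < 1 - ψ := by
    by_cases hall : ∀ n, c n = 0
    · have : ∀ n, g n = 0 := by intro n; rw [hg]; simp [hall n]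
      rw [tsum_congr this, tsum_zero]; linarith
    · push_neg at hall
      obtain ⟨n0, hn0⟩ := hall
      have hc0 : 0 < c n0 := lt_of_le_of_ne (hcnn n0) (Ne.symm hn0)
      exact lt_of_lt_of_le
        (Summable.tsum_lt_tsum_of_nonneg hgnn hgh (hgh_strict n0 hc0) hhsum) hhle
  -- S1 and S3
  set s1 : ℕ → ℝ := fun n => N n * c n * t n with hs1
  set s3 : ℕ → ℝ := fun n => N n * (N n - 1) * c n * t n with hs3
  have hs1nn : ∀ n, 0 ≤ s1 n := fun n =>
    mul_nonneg (mul_nonneg (hNpos n).le (hcnn n)) (htpos n).le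
  have hs3nn : ∀ n, 0 ≤ s3 n := fun n =>
    mul_nonneg (mul_nonneg (mul_nonneg (hNpos n).le (by linarith [hN2 n])) (hcnn n)) (htpos n).le
  have hs1g : ∀ n, s1 n ≤ g n := by
    intro n
    have h1 : (1 : ℝ) ≤ N n - ψ := by linarith [hN2 n]
    have := mul_le_mul_of_nonneg_left h1 (mul_nonneg (mul_nonneg (hNpos n).le (hcnn n)) (htpos n).le)
    calc s1 n = N n * c n * t n * 1 := by ring
      _ ≤ N n * c n * t n * (N n - ψ) := by nlinarith [htpos n, hcnn n, hNpos n]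
      _ = g n := by rw [hg]; ring
  have hs3g : ∀ n, s3 n ≤ g n := by
    intro n
    have h1 : N n - 1 ≤ N n - ψ := by linarith
    have h2 : 0 ≤ N n * (c n * t n) :=
      mul_nonneg (hNpos n).le (mul_nonneg (hcnn n) (htpos n).le)
    calc s3 n = (N n - 1) * (N n * (c n * t n)) := by rw [hs3]; ring
      _ ≤ (N n - ψ) * (N n * (c n * t n)) := mul_le_mul_of_nonneg_right h1 h2
      _ = g n := by rw [hg]; ring
  have hs1sum : Summable s1 := Summable.of_nonneg_of_le hs1nn hs1g hgsum
  have hs3sum : Summable s3 := Summable.of_nonneg_of_le hs3nn hs3g hgsum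
  set S1 : ℝ := ∑' n, s1 n with hS1
  set S3 : ℝ := ∑' n, s3 n with hS3
  have hS1nn : 0 ≤ S1 := tsum_nonneg hs1nn
  have hS3nn : 0 ≤ S3 := tsum_nonneg hs3nn
  have hdecomp : ∀ n, g n = s3 n + (1 - ψ) * s1 n := by
    intro n; rw [hg, hs3, hs1]; ring
  have hS2eq : (∑' n, g n) = S3 + (1 - ψ) * S1 := by
    rw [tsum_congr hdecomp, Summable.tsum_add hs3sum (hs1sum.mul_left _), tsum_mul_left]
  have hS1lt : S1 < 1 := by
    have hpt : ∀ n, (2 - ψ) * s1 n ≤ g n := by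
      intro n
      have h1 : (2 - ψ) ≤ N n - ψ := by linarith [hN2 n]
      have h2 : 0 ≤ N n * (c n * t n) :=
        mul_nonneg (hNpos n).le (mul_nonneg (hcnn n) (htpos n).le)
      calc (2 - ψ) * s1 n = (2 - ψ) * (N n * (c n * t n)) := by rw [hs1]; ring
        _ ≤ (N n - ψ) * (N n * (c n * t n)) := mul_le_mul_of_nonneg_right h1 h2
        _ = g n := by rw [hg]; ring
    have := Summable.tsum_le_tsum hpt (hs1sum.mul_left _) hgsum
    rw [tsum_mul_left] at this
    nlinarith
  -- complex estimates
  have habsz : ∀ e : ℝ, ‖z ^ (e : ℂ)‖ = r ^ e := by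
    intro e
    simp [hr, Complex.norm_cpow_real]
  set u1 : ℕ → ℂ := fun n => ((μ * (n + 2 : ℕ) * a (n + 2) : ℝ) : ℂ) *
    z ^ ((μ * (n + 2 : ℕ) - 1 : ℝ) : ℂ) with hu1
  have hnorm1 : ∀ n, ‖u1 n‖ = s1 n := by
    intro n
    have he : u1 n = ((N n * c n : ℝ) : ℂ) * z ^ ((N n - 1 : ℝ) : ℂ) := rfl
    rw [he, norm_mul, Complex.norm_real, Real.norm_eq_abs,
      habsz, _root_.abs_of_nonneg (mul_nonneg (hNpos n).le (hcnn n))]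
  have hu1sum : Summable fun n => ‖u1 n‖ := (summable_congr hnorm1).2 hs1sum
  have hT1 : ‖∑' n, u1 n‖ ≤ S1 := by
    calc ‖∑' n, u1 n‖ ≤ ∑' n, ‖u1 n‖ := norm_tsum_le_tsum_norm hu1sum
      _ = S1 := tsum_congr hnorm1
  have hFd : Fder μ a z = 1 - ∑' n, u1 n := rfl
  have hFder_lb : 1 - S1 ≤ ‖Fder μ a z‖ := by
    rw [hFd]
    calc 1 - S1 ≤ ‖(1 : ℂ)‖ - ‖∑' n, u1 n‖ := by
          rw [norm_one]; linarith
      _ ≤ ‖(1 : ℂ) - ∑' n, u1 n‖ := norm_sub_norm_le _ _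
  have hFpos : 0 < ‖Fder μ a z‖ := lt_of_lt_of_le (by linarith) hFder_lb
  have hFne : Fder μ a z ≠ 0 := by
    intro hz'; rw [hz'] at hFpos; simp at hFpos
  refine ⟨hFne, ?_⟩
  -- second derivative bound
  set u2 : ℕ → ℂ := fun n => ((μ * (n + 2 : ℕ) * (μ * (n + 2 : ℕ) - 1) * a (n + 2) : ℝ) : ℂ) *
    z ^ ((μ * (n + 2 : ℕ) - 2 : ℝ) : ℂ) with hu2
  have hnorm2 : ∀ n, ‖u2 n‖ = N n * (N n - 1) * c n * r ^ (N n - 2) := by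
    intro n
    have he : u2 n = ((N n * (N n - 1) * c n : ℝ) : ℂ) * z ^ ((N n - 2 : ℝ) : ℂ) := rfl
    rw [he, norm_mul, Complex.norm_real, Real.norm_eq_abs,
      habsz, _root_.abs_of_nonneg
        (mul_nonneg (mul_nonneg (hNpos n).le (by linarith [hN2 n])) (hcnn n))]
  have hrmul : ∀ n, r * (N n * (N n - 1) * c n * r ^ (N n - 2)) = s3 n := by
    intro n
    have he : r ^ (N n - 1) = r ^ (N n - 2) * r := by
      rw [show N n - 1 = (N n - 2) + 1 by ring, Real.rpow_add_one hrpos.ne']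
    show r * (N n * (N n - 1) * c n * r ^ (N n - 2)) = N n * (N n - 1) * c n * r ^ (N n - 1)
    rw [he]; ring
  have hu2sum : Summable fun n => ‖u2 n‖ := by
    have : Summable fun n => r * (N n * (N n - 1) * c n * r ^ (N n - 2)) :=
      (summable_congr hrmul).2 hs3sum
    have h2 := (summable_mul_left_iff hrpos.ne').1 this
    exact (summable_congr hnorm2).2 h2
  have hFd2 : Fder2 μ a z = - ∑' n, u2 n := rfl
  have habs2 : ‖z * Fder2 μ a z‖ ≤ S3 := by
    rw [hFd2, norm_mul, ← hr]
    rw [norm_neg]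
    have h1 : ‖∑' n, u2 n‖ ≤ ∑' n, ‖u2 n‖ := by
      exact norm_tsum_le_tsum_norm hu2sum
    have h2 : r * (∑' n, ‖u2 n‖) = S3 := by
      rw [← tsum_mul_left, hS3]
      exact tsum_congr fun n => by rw [hnorm2 n]; exact hrmul n
    calc r * ‖∑' n, u2 n‖ ≤ r * (∑' n, ‖u2 n‖) :=
          mul_le_mul_of_nonneg_left h1 hrpos.le
      _ = S3 := h2
  -- conclude
  have hwle : ‖z * Fder2 μ a z / Fder μ a z‖ * (1 - S1) ≤ S3 := by
    rw [norm_div]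
    rw [div_mul_eq_mul_div]
    rw [div_le_iff₀ hFpos]
    calc ‖z * Fder2 μ a z‖ * (1 - S1)
        ≤ S3 * ‖Fder μ a z‖ := by
          apply mul_le_mul habs2 hFder_lb (by linarith) hS3nn
      _ = _ := by ring
  have hre : -(‖z * Fder2 μ a z / Fder μ a z‖) ≤ (z * Fder2 μ a z / Fder μ a z).re :=
    (abs_le.1 (Complex.abs_re_le_norm _)).1
  have habsnn : 0 ≤ ‖z * Fder2 μ a z / Fder μ a z‖ := norm_nonneg _
  have hgoal : ‖z * Fder2 μ a z / Fder μ a z‖ < 1 - ψ := by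
    have h0 : S3 + (1 - ψ) * S1 < 1 - ψ := hS2eq ▸ hS2lt
    have h1 : S3 < (1 - ψ) * (1 - S1) := by
      have hexp : (1 - ψ) * (1 - S1) = (1 - ψ) - (1 - ψ) * S1 := by ring
      rw [hexp]; linarith
    have h2 : ‖z * Fder2 μ a z / Fder μ a z‖ * (1 - S1) <
        (1 - ψ) * (1 - S1) := lt_of_le_of_lt hwle h1
    exact lt_of_mul_lt_mul_right h2 (by linarith : (0:ℝ) ≤ 1 - S1)
  have : (1 + z * Fder2 μ a z / Fder μ a z).re = 1 + (z * Fder2 μ a z / Fder μ a z).re := by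
    simp
  rw [this]
  linarith
end

section
/- Assume Σ_{n=2}^∞ Ξ(n)·aₙ ≤ (A−B)(1−γ), and let r₃ = inf_{n≥2} [ (Ξ(n)/((A−B)(1−γ))) · (1−ψ)/(μn) ]^{1/(μn−1)}. Then F_μ is close-to-convex (of bounded turning) of order ψ in |z| < r₃: for every z ∈ 𝕌* with 0 < |z| < r₃ one has Re( F_μ′(z) ) > ψ. -/
open Complex

set_option maxHeartbeats 1600000 in
private lemma stmt8_aux (μ A B γ ψ : ℝ) (k m : ℕ) (a ϑ lam : ℕ → ℝ)
    (hμ : 1 ≤ μ) (hkm : m ≤ k)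
    (hB : -1 ≤ B) (hBA : B < A) (hA : A ≤ 1) (hB0 : B < 0)
    (hγ0 : 0 ≤ γ) (hγ1 : γ < 1) (hψ0 : 0 ≤ ψ) (hψ1 : ψ < 1)
    (ha : ∀ n, 2 ≤ n → 0 ≤ a n)
    (hlam : ∀ n, 2 ≤ n → 0 ≤ lam n) (hϑ : ∀ n, 2 ≤ n → lam n ≤ ϑ n)
    (hsum : Summable fun n : ℕ => Xi μ A B γ k m ϑ lam (n + 2) * a (n + 2))
    (hle : (∑' n : ℕ, Xi μ A B γ k m ϑ lam (n + 2) * a (n + 2)) ≤ (A - B) * (1 - γ)) :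
    ∀ z : ℂ, ‖z‖ < 1 → (¬ ∃ x : ℝ, x ≤ 0 ∧ (x : ℂ) = z) →
      0 < ‖z‖ →
      ‖z‖ <
        (⨅ n : ℕ, (Xi μ A B γ k m ϑ lam (n + 2) / ((A - B) * (1 - γ)) *
            ((1 - ψ) / (μ * (n + 2 : ℕ)))) ^ ((1 : ℝ) / (μ * (n + 2 : ℕ) - 1))) →
      ψ < (Fder μ a z).re := by
  intro z hz1 hslit hz0 hr
  set D : ℝ := (A - B) * (1 - γ) with hD
  have hD0 : 0 < D := mul_pos (sub_pos.2 hBA) (sub_pos.2 hγ1)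
  have hψ : 0 < 1 - ψ := sub_pos.2 hψ1
  -- basic facts
  have hμn : ∀ n : ℕ, (2:ℝ) ≤ μ * (n + 2 : ℕ) := by
    intro n
    have h2 : (2:ℝ) ≤ (n + 2 : ℕ) := by push_cast; linarith [Nat.cast_nonneg (α := ℝ) n]
    nlinarith
  have hΞ : ∀ n : ℕ, 0 ≤ Xi μ A B γ k m ϑ lam (n + 2) := by
    intro n
    have hx : (1:ℝ) ≤ μ * (n + 2 : ℕ) := by linarith [hμn n]
    have hpow : (μ * (n + 2 : ℕ)) ^ m ≤ (μ * (n + 2 : ℕ)) ^ k := pow_le_pow_right₀ hx hkm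
    have hl := hlam (n + 2) (by omega)
    have ht := hϑ (n + 2) (by omega)
    have hpm : (0:ℝ) ≤ (μ * (n + 2 : ℕ)) ^ m := by positivity
    have hpk : (0:ℝ) ≤ (μ * (n + 2 : ℕ)) ^ k := by positivity
    have h1 : (μ * (n + 2 : ℕ)) ^ m * ϑ (n + 2) ≤ (μ * (n + 2 : ℕ)) ^ k * ϑ (n + 2) :=
      mul_le_mul_of_nonneg_right hpow (hl.trans ht)
    have h2 : (μ * (n + 2 : ℕ)) ^ m * lam (n + 2) ≤ (μ * (n + 2 : ℕ)) ^ m * ϑ (n + 2) :=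
      mul_le_mul_of_nonneg_left ht hpm
    have h3 : (0:ℝ) ≤ (μ * (n + 2 : ℕ)) ^ k * ϑ (n + 2) - (μ * (n + 2 : ℕ)) ^ m * lam (n + 2) := by
      linarith
    unfold Xi
    have h4 := mul_nonneg (by linarith : (0:ℝ) ≤ 1 - B) h3
    have h5 := mul_nonneg (mul_nonneg (by linarith : (0:ℝ) ≤ A - B)
      (by linarith : (0:ℝ) ≤ 1 - γ)) (mul_nonneg hpm hl)
    linarith
  set C : ℕ → ℝ := fun n => Xi μ A B γ k m ϑ lam (n + 2) / D * ((1 - ψ) / (μ * (n + 2 : ℕ)))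
    with hCdef
  have hC : ∀ n, 0 ≤ C n := fun n =>
    mul_nonneg (div_nonneg (hΞ n) hD0.le) (div_nonneg hψ.le (by linarith [hμn n]))
  set p : ℕ → ℝ := fun n => μ * (n + 2 : ℕ) - 1 with hpdef
  have hp : ∀ n, 0 < p n := fun n => by simp only [hpdef]; linarith [hμn n]
  -- |z| < C n ^ (1/p n) for each n
  have hbdd : BddBelow (Set.range fun n : ℕ => C n ^ ((1:ℝ) / p n)) := by
    refine ⟨0, ?_⟩
    rintro x ⟨n, rfl⟩
    exact Real.rpow_nonneg (hC n) _
  have hzC : ∀ n : ℕ, ‖z‖ ^ p n < C n := by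
    intro n
    have h1 : ‖z‖ < C n ^ ((1:ℝ) / p n) := lt_of_lt_of_le hr (ciInf_le hbdd n)
    have h2 : ‖z‖ ^ p n < (C n ^ ((1:ℝ) / p n)) ^ p n :=
      Real.rpow_lt_rpow (norm_nonneg z) h1 (hp n)
    rwa [← Real.rpow_mul (hC n), one_div_mul_cancel (hp n).ne', Real.rpow_one] at h2
  -- goal series terms
  set g : ℕ → ℝ := fun n => μ * (n + 2 : ℕ) * a (n + 2) * ‖z‖ ^ p n with hgdef
  set h : ℕ → ℝ := fun n => Xi μ A B γ k m ϑ lam (n + 2) * a (n + 2) * ((1 - ψ) / D)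
    with hhdef
  have hμC : ∀ n, μ * (n + 2 : ℕ) * C n = Xi μ A B γ k m ϑ lam (n + 2) * ((1 - ψ) / D) := by
    intro n
    have hne : μ * (n + 2 : ℕ) ≠ 0 := by linarith [hμn n]
    simp only [hCdef]
    field_simp
  have hgle : ∀ n, g n ≤ h n := by
    intro n
    have han := ha (n + 2) (by omega)
    have := mul_le_mul_of_nonneg_left (hzC n).le
      (mul_nonneg (by linarith [hμn n] : (0:ℝ) ≤ μ * (n + 2 : ℕ)) han)
    calc g n ≤ μ * (n + 2 : ℕ) * a (n + 2) * C n := by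
          simpa [hgdef, mul_assoc] using this
      _ = h n := by
          simp only [hhdef]
          rw [show μ * (n + 2 : ℕ) * a (n + 2) * C n
              = (μ * (n + 2 : ℕ) * C n) * a (n + 2) by ring, hμC n]; ring
  have hglt : ∀ n, 0 < a (n + 2) → g n < h n := by
    intro n han
    have hμpos : (0:ℝ) < μ * (n + 2 : ℕ) := by linarith [hμn n]
    have := mul_lt_mul_of_pos_left (hzC n) (mul_pos hμpos han)
    calc g n < μ * (n + 2 : ℕ) * a (n + 2) * C n := by
          simpa [hgdef, mul_assoc] using this
      _ = h n := by
          simp only [hhdef]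
          rw [show μ * (n + 2 : ℕ) * a (n + 2) * C n
              = (μ * (n + 2 : ℕ) * C n) * a (n + 2) by ring, hμC n]; ring
  have hg0 : ∀ n, 0 ≤ g n := by
    intro n
    exact mul_nonneg (mul_nonneg (by linarith [hμn n]) (ha (n + 2) (by omega)))
      (Real.rpow_nonneg (norm_nonneg z) _)
  have hhsum : Summable h := hsum.mul_right _
  have hgsum : Summable g := Summable.of_nonneg_of_le hg0 hgle hhsum
  have hhle : ∑' n, h n ≤ 1 - ψ := by
    have : ∑' n, h n = (∑' n, Xi μ A B γ k m ϑ lam (n + 2) * a (n + 2)) * ((1 - ψ) / D) :=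
      tsum_mul_right
    rw [this]
    have h2 : (∑' n, Xi μ A B γ k m ϑ lam (n + 2) * a (n + 2)) * ((1 - ψ) / D)
        ≤ D * ((1 - ψ) / D) :=
      mul_le_mul_of_nonneg_right hle (div_nonneg hψ.le hD0.le)
    rwa [mul_div_cancel₀ _ hD0.ne'] at h2
  -- strict inequality on the sum
  have hkey : ∑' n, g n < 1 - ψ := by
    by_cases hall : ∀ n : ℕ, a (n + 2) = 0
    · have hg : g = fun _ => (0:ℝ) := by
        funext n; simp [hgdef, hall n]
      rw [hg, tsum_zero]; exact hψ
    · push_neg at hall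
      obtain ⟨n₀, hn₀⟩ := hall
      have han₀ : 0 < a (n₀ + 2) := lt_of_le_of_ne (ha (n₀ + 2) (by omega)) (Ne.symm hn₀)
      have := Summable.tsum_lt_tsum hgle (hglt n₀ han₀) hgsum hhsum
      linarith [hhle]
  -- relate to Fder
  have hnorm : (fun n : ℕ => ‖((μ * (n + 2 : ℕ) * a (n + 2) : ℝ) : ℂ) *
      z ^ ((μ * (n + 2 : ℕ) - 1 : ℝ) : ℂ)‖) = g := by
    funext n
    have han := ha (n + 2) (by omega)
    rw [norm_mul, Complex.norm_real, Real.norm_eq_abs,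
      Complex.norm_cpow_real,
      _root_.abs_of_nonneg (mul_nonneg (by linarith [hμn n] : (0:ℝ) ≤ μ * (n + 2 : ℕ)) han)]
  have hgsum' : Summable (fun n : ℕ => ‖((μ * (n + 2 : ℕ) * a (n + 2) : ℝ) : ℂ) *
      z ^ ((μ * (n + 2 : ℕ) - 1 : ℝ) : ℂ)‖) := by rw [hnorm]; exact hgsum
  have hfsum : Summable (fun n : ℕ => ((μ * (n + 2 : ℕ) * a (n + 2) : ℝ) : ℂ) *
      z ^ ((μ * (n + 2 : ℕ) - 1 : ℝ) : ℂ)) := summable_norm_iff.mp hgsum'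
  have hT : ‖∑' n : ℕ, ((μ * (n + 2 : ℕ) * a (n + 2) : ℝ) : ℂ) *
      z ^ ((μ * (n + 2 : ℕ) - 1 : ℝ) : ℂ)‖ ≤ ∑' n, g n := by
    refine (norm_tsum_le_tsum_norm hgsum').trans_eq ?_
    rw [hnorm]
  have hre := Complex.re_le_norm (∑' n : ℕ, ((μ * (n + 2 : ℕ) * a (n + 2) : ℝ) : ℂ) *
      z ^ ((μ * (n + 2 : ℕ) - 1 : ℝ) : ℂ))
  rw [Fder, Complex.sub_re, Complex.one_re]
  linarith [hre.trans (hT.trans hkey.le), lt_of_le_of_lt (hre.trans hT) hkey]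

/-- radius of close-to-convexity/bounded turning: if
`Σ_{n≥2} Ξ(n)aₙ ≤ (A−B)(1−γ)` then, with
`r₃ = inf_{n≥2} [(Ξ(n)/((A−B)(1−γ)))·(1−ψ)/(μn)]^{1/(μn−1)}`, the function `F_μ` is of
bounded turning of order `ψ` for `0 < |z| < r₃` in the slit unit disk:
`Re(F_μ′(z)) > ψ`. -/
theorem stmt8 (μ A B γ ψ : ℝ) (k m : ℕ) (a ϑ lam : ℕ → ℝ)
    (hμ : 1 ≤ μ) (hkm : m ≤ k)
    (hB : -1 ≤ B) (hBA : B < A) (hA : A ≤ 1) (hB0 : B < 0)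
    (hγ0 : 0 ≤ γ) (hγ1 : γ < 1) (hψ0 : 0 ≤ ψ) (hψ1 : ψ < 1)
    (ha : ∀ n, 2 ≤ n → 0 ≤ a n)
    (hlam : ∀ n, 2 ≤ n → 0 ≤ lam n) (hϑ : ∀ n, 2 ≤ n → lam n ≤ ϑ n)
    (hsum : Summable fun n : ℕ => Xi μ A B γ k m ϑ lam (n + 2) * a (n + 2))
    (hle : (∑' n : ℕ, Xi μ A B γ k m ϑ lam (n + 2) * a (n + 2)) ≤ (A - B) * (1 - γ)) :
    ∀ z : ℂ, ‖z‖ < 1 → (¬ ∃ x : ℝ, x ≤ 0 ∧ (x : ℂ) = z) →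
      0 < ‖z‖ →
      ‖z‖ <
        (⨅ n : ℕ, (Xi μ A B γ k m ϑ lam (n + 2) / ((A - B) * (1 - γ)) *
            ((1 - ψ) / (μ * (n + 2 : ℕ)))) ^ ((1 : ℝ) / (μ * (n + 2 : ℕ) - 1))) →
      ψ < (Fder μ a z).re :=
  stmt8_aux μ A B γ ψ k m a ϑ lam hμ hkm hB hBA hA hB0 hγ0 hγ1 hψ0 hψ1 ha hlam hϑ hsum hle
end
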